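/- arXiv:2304.05007 — 5 statements merged into one kernel-verified Lean document; each statement's English description precedes it below -/
import Mathlib

section
/- Let n ≥ 1 be an integer, p > 1, q ≥ 1, and β, β' ∈ [0, (p−1)/(p+1)] with β' ≤ β and 2pβ/((p−1)q) ≤ 1. Then for every real γ ≥ 0: D_γ( P^q_{β',p} ‖ Q^q_{β',p} ) ≤ D_γ( P^q_{β,p} ‖ Q^q_{β,p} ). -/
open scoped ENNReal
open Finset

noncomputable section

/-- Clamp a real number into an `ℝ≥0∞` probability (identity on `[0,1]`). -/
def prob (x : ℝ) : ℝ≥0∞ := min (ENNReal.ofReal x) 1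

lemma prob_le_one (x : ℝ) : prob x ≤ 1 := min_le_right _ _

/-- Hockey-stick divergence `D_γ(P‖Q) = ∑_y max 0 (P y − γ·Q y)`. -/
def hsDiv {Y : Type*} (P Q : PMF Y) (γ : ℝ) : ℝ :=
  ∑' y, max 0 ((P y).toReal - γ * (Q y).toReal)

/-- The shuffle of a list of PMFs: sample independently and return the multiset of results. -/
def shuffle {Y : Type*} : List (PMF Y) → PMF (Multiset Y)
  | [] => PMF.pure 0
  | μ :: μs => μ.bind fun y => (shuffle μs).map fun s => y ::ₘ s

/-- Binomial law on ℕ with `m` trials and success probability `θ` (a real, clamped). -/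
def binomN (θ : ℝ) (m : ℕ) : PMF ℕ :=
  (PMF.binomial (prob θ).toNNReal
    (by simpa using ENNReal.toNNReal_mono ENNReal.one_ne_top (prob_le_one θ)) m).map Fin.val

/-- Three-point distribution on `Fin 3` with weights `w1, w2, 1 − w1 − w2` (clamped). -/
def triR (w1 w2 : ℝ) : PMF (Fin 3) :=
  PMF.ofFintype
    ![prob w1, min (prob w2) (1 - prob w1),
      1 - (prob w1 + min (prob w2) (1 - prob w1))]
    (by
      have h : prob w1 + min (prob w2) (1 - prob w1) ≤ 1 := by
        calc prob w1 + min (prob w2) (1 - prob w1)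
            ≤ prob w1 + (1 - prob w1) := by gcongr; exact min_le_right _ _
          _ = 1 := add_tsub_cancel_of_le (prob_le_one w1)
      simp only [Fin.sum_univ_three, Matrix.cons_val_zero, Matrix.cons_val_one,
        Matrix.head_cons, Matrix.cons_val_two, Matrix.tail_cons]
      exact add_tsub_cancel_of_le h)

/-- Law of `(A+Δ₁, C−A+Δ₂)` where `C ~ Binomial(m, θC)`, `A ~ Binomial(C, θA)`, and
`(Δ₁,Δ₂)` equals `(1,0)` w.p. `w1`, `(0,1)` w.p. `w2`, `(0,0)` otherwise. -/
def lawP (m : ℕ) (θC θA w1 w2 : ℝ) : PMF (ℕ × ℕ) :=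
  (binomN θC m).bind fun c =>
    (binomN θA c).bind fun a =>
      (triR w1 w2).map fun d =>
        if d = 0 then (a + 1, c - a) else if d = 1 then (a, c - a + 1) else (a, c - a)

/-- Law of `(A+Δ₂, C−A+Δ₁)` for the same sampling process. -/
def lawQ (m : ℕ) (θC θA w1 w2 : ℝ) : PMF (ℕ × ℕ) :=
  (binomN θC m).bind fun c =>
    (binomN θA c).bind fun a =>
      (triR w1 w2).map fun d =>
        if d = 0 then (a, c - a + 1) else if d = 1 then (a + 1, c - a) else (a, c - a)

/-- `P^q_{β,p}` with `n` users: `α = β/(p−1)`, `r = pα/q`, `C ~ Binomial(n−1, 2r)`,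
`A ~ Binomial(C, 1/2)`. -/
def Pq (n : ℕ) (p β q : ℝ) : PMF (ℕ × ℕ) :=
  lawP (n - 1) (2 * (p * (β / (p - 1)) / q)) (1 / 2) (p * (β / (p - 1))) (β / (p - 1))

/-- `Q^q_{β,p}`. -/
def Qq (n : ℕ) (p β q : ℝ) : PMF (ℕ × ℕ) :=
  lawQ (n - 1) (2 * (p * (β / (p - 1)) / q)) (1 / 2) (p * (β / (p - 1))) (β / (p - 1))

/-- `CDF_{c,θ}[c₁,c₂] = ∑_{c₁ ≤ i ≤ c₂, 0 ≤ i ≤ c} C(c,i) θ^i (1−θ)^{c−i}`. -/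
def binCDF (c : ℕ) (θ : ℝ) (c1 c2 : ℝ) : ℝ :=
  ∑ i ∈ Finset.range (c + 1),
    if c1 ≤ (i : ℝ) ∧ (i : ℝ) ≤ c2 then (c.choose i : ℝ) * θ ^ i * (1 - θ) ^ (c - i) else 0

/-- Expectation of `f` under `Binomial(m, θ)`. -/
def binExp (m : ℕ) (θ : ℝ) (f : ℕ → ℝ) : ℝ :=
  ∑ c ∈ Finset.range (m + 1), (m.choose c : ℝ) * θ ^ c * (1 - θ) ^ (m - c) * f c

/-- The `(p, β)`-variation property of the first randomizer. -/
def VariationProp {X Y : Type*} (R1 : X → PMF Y) (p β : ℝ) : Prop :=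
  ∀ x x' : X, (∀ y, (R1 x y).toReal ≤ p * (R1 x' y).toReal) ∧ hsDiv (R1 x) (R1 x') 1 ≤ β

/-- The `q`-ratio property of the first randomizer w.r.t. the others. -/
def RatioProp {X Y : Type*} {m : ℕ} (R1 : X → PMF Y) (R : Fin m → X → PMF Y) (q : ℝ) : Prop :=
  ∀ (i : Fin m) (x x' : X) (y : Y), (R1 x y).toReal ≤ q * (R i x' y).toReal



-- ===== auxiliary development =====

/-- real binomial pmf, zero for k > m automatically -/
def bpmf (θ : ℝ) (m k : ℕ) : ℝ := (m.choose k : ℝ) * θ ^ k * (1 - θ) ^ (m - k)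

lemma bpmf_nonneg {θ : ℝ} (h0 : 0 ≤ θ) (h1 : θ ≤ 1) (m k : ℕ) : 0 ≤ bpmf θ m k := by
  have h2 : (0:ℝ) ≤ 1 - θ := by linarith
  unfold bpmf
  apply mul_nonneg (mul_nonneg (by positivity) (by positivity)) (by positivity)

lemma bpmf_eq_zero {θ : ℝ} {m k : ℕ} (h : m < k) : bpmf θ m k = 0 := by
  simp [bpmf, Nat.choose_eq_zero_of_lt h]

lemma sum_bpmf (θ : ℝ) (m : ℕ) : ∑ k ∈ range (m + 1), bpmf θ m k = 1 := by
  have h := add_pow θ (1 - θ) m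
  have h2 : θ + (1 - θ) = (1:ℝ) := by ring
  rw [h2, one_pow] at h
  conv_rhs => rw [h]
  apply Finset.sum_congr rfl
  intro k _; unfold bpmf; push_cast; ring

lemma sum_bpmf_of_le (θ : ℝ) {m : ℕ} {N : ℕ} (h : m + 1 ≤ N) :
    ∑ k ∈ range N, bpmf θ m k = 1 := by
  rw [← sum_bpmf θ m]
  symm
  apply Finset.sum_subset (Finset.range_subset_range.2 h)
  intro k _ hk
  simp only [mem_range, not_lt] at hk
  exact bpmf_eq_zero (by omega)

/-- trinomial helper -/
lemma choose_helper (m a y : ℕ) :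
    (m.choose a : ℝ) * ((m - a).choose y : ℝ) = (m.choose y : ℝ) * ((m - y).choose a : ℝ) := by
  rcases le_or_gt (a + y) m with h | h
  · have h1 := Nat.choose_mul (n := m) (k := a + y) (show a ≤ a + y by omega)
    have h2 := Nat.choose_mul (n := m) (k := a + y) (show y ≤ a + y by omega)
    have h3 : (a + y).choose a = (a + y).choose y := Nat.choose_symm_add
    have e1 : a + y - a = y := by omega
    have e2 : a + y - y = a := by omega
    rw [e1] at h1; rw [e2] at h2
    have : m.choose a * (m - a).choose y = m.choose y * (m - y).choose a := by
      rw [← h1, h3, h2]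
    exact_mod_cast this
  · have h1 : (m - a).choose y = 0 ∨ (m.choose a) = 0 := by
      rcases le_or_gt a m with ha | ha
      · left; exact Nat.choose_eq_zero_of_lt (by omega)
      · right; exact Nat.choose_eq_zero_of_lt ha
    have h2 : (m - y).choose a = 0 ∨ (m.choose y) = 0 := by
      rcases le_or_gt y m with hy | hy
      · left; exact Nat.choose_eq_zero_of_lt (by omega)
      · right; exact Nat.choose_eq_zero_of_lt hy
    rcases h1 with h1 | h1 <;> rcases h2 with h2 | h2 <;> simp [h1, h2]

/-- law of (A, C−A) with C ~ Bin(m,θ), A ~ Bin(C, 1/2) -/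
def preP (θ : ℝ) (m x y : ℕ) : ℝ := bpmf θ m (x + y) * bpmf (1/2) (x + y) x

lemma preP_closed (θ : ℝ) (m x y : ℕ) :
    preP θ m x y = (m.choose x : ℝ) * ((m - x).choose y : ℝ) * (θ/2) ^ (x + y) * (1 - θ) ^ (m - (x+y)) := by
  unfold preP bpmf
  have h1 : (m.choose (x+y) : ℝ) * ((x+y).choose x : ℝ) = (m.choose x : ℝ) * ((m - x).choose y : ℝ) := by
    rcases le_or_gt (x + y) m with h | h
    · have := Nat.choose_mul (n := m) (k := x + y) (show x ≤ x + y by omega)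
      have e : x + y - x = y := by omega
      rw [e] at this
      exact_mod_cast this
    · rw [Nat.choose_eq_zero_of_lt h]
      rcases le_or_gt x m with hx | hx
      · rw [Nat.choose_eq_zero_of_lt (show m - x < y by omega)]
        simp
      · rw [Nat.choose_eq_zero_of_lt hx]; simp
  have h2 : ((1:ℝ) - 1/2) = 1/2 := by norm_num
  rw [h2]
  have h3 : (1/2 : ℝ)^x * (1/2 : ℝ)^(x + y - x) = (1/2 : ℝ)^(x+y) := by
    rw [← pow_add]; congr 1; omega
  calc (m.choose (x+y) : ℝ) * θ ^ (x+y) * (1-θ)^(m - (x+y)) * ((x+y).choose x * (1/2:ℝ)^x * (1/2:ℝ)^(x+y-x))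
      = ((m.choose (x+y) : ℝ) * ((x+y).choose x : ℝ)) * θ ^ (x+y) * (1-θ)^(m-(x+y)) * ((1/2:ℝ)^x * (1/2:ℝ)^(x+y-x)) := by ring
    _ = ((m.choose x : ℝ) * ((m - x).choose y : ℝ)) * θ ^ (x+y) * (1-θ)^(m-(x+y)) * (1/2:ℝ)^(x+y) := by rw [h1, h3]
    _ = _ := by simp only [div_pow, one_pow]; ring

/-- generalized thinning sum -/
lemma gthin (u v lam : ℝ) (n y : ℕ) {N : ℕ} (hN : n + 1 ≤ N) :
    ∑ b ∈ range N, ((n.choose b : ℝ) * u ^ b * v ^ (n - b)) * bpmf lam b y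
      = (n.choose y : ℝ) * (u * lam) ^ y * (u * (1 - lam) + v) ^ (n - y) := by
  rcases le_or_gt y n with hy | hy
  · -- restrict to b ∈ [y, n]
    have step1 : ∑ b ∈ range N, ((n.choose b : ℝ) * u ^ b * v ^ (n - b)) * bpmf lam b y
        = ∑ b ∈ Ico y (n+1), ((n.choose b : ℝ) * u ^ b * v ^ (n - b)) * bpmf lam b y := by
      symm
      apply Finset.sum_subset
      · intro b hb; simp only [mem_Ico] at hb; simp only [mem_range]; omega
      · intro b hb hb2
        simp only [mem_range, mem_Ico, not_and, not_le, not_lt] at hb hb2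
        rcases le_or_gt y b with h | h
        · have : n < b := by omega
          rw [Nat.choose_eq_zero_of_lt this]; simp
        · rw [bpmf_eq_zero h]; simp
    rw [step1, Finset.sum_Ico_eq_sum_range]
    have e : n + 1 - y = n - y + 1 := by omega
    rw [e]
    have step2 : ∀ j ∈ range (n - y + 1),
        ((n.choose (y+j) : ℝ) * u ^ (y+j) * v ^ (n - (y+j))) * bpmf lam (y+j) y
          = ((n.choose y : ℝ) * (u*lam)^y) * (((n-y).choose j : ℝ) * (u*(1-lam))^j * v^((n-y)-j)) := by
      intro j hj
      unfold bpmf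
      have hc : (n.choose (y+j) : ℝ) * ((y+j).choose y : ℝ) = (n.choose y : ℝ) * ((n-y).choose j : ℝ) := by
        simp only [mem_range] at hj
        have := Nat.choose_mul (n := n) (k := y + j) (show y ≤ y + j by omega)
        have e2 : y + j - y = j := by omega
        rw [e2] at this
        exact_mod_cast this
      have e3 : y + j - y = j := by omega
      have e4 : n - (y + j) = (n - y) - j := by omega
      rw [e3, e4]
      calc (n.choose (y+j) : ℝ) * u ^ (y+j) * v ^ ((n-y) - j) * (((y+j).choose y : ℝ) * lam ^ y * (1-lam) ^ j)
          = ((n.choose (y+j) : ℝ) * ((y+j).choose y : ℝ)) * u ^ (y+j) * v ^ ((n-y)-j) * lam ^ y * (1-lam)^j := by ring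
        _ = ((n.choose y : ℝ) * ((n-y).choose j : ℝ)) * (u^y * u^j) * v ^ ((n-y)-j) * lam ^ y * (1-lam)^j := by rw [hc, pow_add]
        _ = _ := by rw [mul_pow, mul_pow]; ring
    rw [Finset.sum_congr rfl step2, ← Finset.mul_sum]
    have hap := add_pow (u * (1-lam)) v (n - y)
    rw [hap, Finset.mul_sum, Finset.mul_sum]
    apply Finset.sum_congr rfl
    intro j _
    ring
  · -- y > n : both sides 0
    have hz : ∀ b ∈ range N, ((n.choose b : ℝ) * u ^ b * v ^ (n - b)) * bpmf lam b y = 0 := by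
      intro b hb
      rcases le_or_gt b n with h | h
      · rw [bpmf_eq_zero (by omega)]; simp
      · rw [Nat.choose_eq_zero_of_lt h]; simp
    rw [Finset.sum_eq_zero hz, Nat.choose_eq_zero_of_lt hy]
    simp

/-- 2D thinning identity -/
lemma thin2 (θ lam : ℝ) (m x y : ℕ) {Na Nb : ℕ} (hNa : m + 1 ≤ Na) (hNb : m + 1 ≤ Nb) :
    ∑ a ∈ range Na, ∑ b ∈ range Nb, preP θ m a b * (bpmf lam a x * bpmf lam b y)
      = preP (θ * lam) m x y := by
  set V : ℝ := (θ/2) * (1 - lam) + (1 - θ) with hV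
  have inner : ∀ a ∈ range Na,
      ∑ b ∈ range Nb, preP θ m a b * (bpmf lam a x * bpmf lam b y)
        = ((m.choose y : ℝ) * (θ*lam/2)^y) * (((m-y).choose a : ℝ) * (θ/2)^a * V^((m-y)-a)) * bpmf lam a x := by
    intro a _
    have step : ∀ b ∈ range Nb, preP θ m a b * (bpmf lam a x * bpmf lam b y)
        = ((m.choose a : ℝ) * (θ/2)^a * bpmf lam a x) * ((((m-a).choose b : ℝ) * (θ/2)^b * (1-θ)^((m-a)-b)) * bpmf lam b y) := by
      intro b _
      rw [preP_closed]
      have e1 : m - (a + b) = (m - a) - b := by omega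
      rw [e1, pow_add]
      ring
    rw [Finset.sum_congr rfl step, ← Finset.mul_sum,
        gthin (θ/2) (1-θ) lam (m-a) y (show m - a + 1 ≤ Nb by omega)]
    have e2 : (m - a) - y = (m - y) - a := by omega
    have e3 : (m.choose a : ℝ) * ((m-a).choose y : ℝ) = (m.choose y : ℝ) * ((m-y).choose a : ℝ) :=
      choose_helper m a y
    calc ((m.choose a : ℝ) * (θ/2)^a * bpmf lam a x) * ((((m-a).choose y : ℝ)) * (θ/2*lam)^y * V^((m-a)-y))
        = ((m.choose a : ℝ) * ((m-a).choose y : ℝ)) * (θ/2)^a * (θ/2*lam)^y * V^((m-a)-y) * bpmf lam a x := by ring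
      _ = ((m.choose y : ℝ) * ((m-y).choose a : ℝ)) * (θ/2)^a * (θ/2*lam)^y * V^((m-y)-a) * bpmf lam a x := by rw [e2, e3]
      _ = _ := by rw [show (θ/2*lam) = θ*lam/2 by ring]; ring
  rw [Finset.sum_congr rfl inner]
  have step2 : ∀ a ∈ range Na,
      ((m.choose y : ℝ) * (θ*lam/2)^y) * (((m-y).choose a : ℝ) * (θ/2)^a * V^((m-y)-a)) * bpmf lam a x
        = ((m.choose y : ℝ) * (θ*lam/2)^y) * ((((m-y).choose a : ℝ) * (θ/2)^a * V^((m-y)-a)) * bpmf lam a x) := by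
    intro a _; ring
  rw [Finset.sum_congr rfl step2, ← Finset.mul_sum,
      gthin (θ/2) V lam (m-y) x (show m - y + 1 ≤ Na by omega)]
  rw [preP_closed]
  have e4 : (m - y) - x = m - (x + y) := by omega
  have e5 : θ/2 * (1 - lam) + V = 1 - θ * lam := by rw [hV]; ring
  have e6 : (m.choose x : ℝ) * ((m-x).choose y : ℝ) = (m.choose y : ℝ) * ((m-y).choose x : ℝ) :=
    choose_helper m x y
  rw [e4, e5, e6, show (θ/2*lam) = θ*lam/2 by ring, pow_add]
  ring

/-- Pascal-type recursion for the thinning kernel -/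
lemma bpmf_succ (lam : ℝ) (a x : ℕ) :
    bpmf lam (a + 1) x
      = (if 1 ≤ x then lam * bpmf lam a (x - 1) else 0) + (1 - lam) * bpmf lam a x := by
  rcases x with _ | x
  · simp only [if_neg (by omega : ¬ (1 ≤ 0))]
    unfold bpmf
    simp [pow_succ]
    ring
  · simp only [if_pos (by omega : 1 ≤ x + 1), Nat.add_sub_cancel]
    unfold bpmf
    rw [Nat.choose_succ_succ a x]
    push_cast
    rcases le_or_gt (x+1) a with h | h
    · have e2 : a - x = a - (x+1) + 1 := by omega
      rw [e2, pow_succ]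
      ring
    · rw [Nat.choose_eq_zero_of_lt h]
      push_cast
      ring

lemma thin_shift1 (θ lam : ℝ) (m x y : ℕ) :
    ∑ a ∈ range (m+3), ∑ b ∈ range (m+3),
        (if 1 ≤ a then preP θ m (a-1) b else 0) * (bpmf lam a x * bpmf lam b y)
      = (if 1 ≤ x then lam * preP (θ*lam) m (x-1) y else 0) + (1-lam) * preP (θ*lam) m x y := by
  rw [Finset.sum_range_succ' (fun a => ∑ b ∈ range (m+3),
        (if 1 ≤ a then preP θ m (a-1) b else 0) * (bpmf lam a x * bpmf lam b y)) (m+2)]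
  simp only [if_neg (by omega : ¬ (1 ≤ 0)), zero_mul, Finset.sum_const_zero, add_zero,
    show ∀ i : ℕ, (1 ≤ i + 1) = True from fun i => eq_true (by omega),
    show ∀ i : ℕ, (1 ≤ 1 + i) = True from fun i => eq_true (by omega),
    if_true, Nat.add_sub_cancel]
  have step : ∀ a ∈ range (m+2), ∑ b ∈ range (m+3),
      preP θ m a b * (bpmf lam (a+1) x * bpmf lam b y)
      = (if 1 ≤ x then lam * ∑ b ∈ range (m+3), preP θ m a b * (bpmf lam a (x-1) * bpmf lam b y) else 0)
        + (1-lam) * ∑ b ∈ range (m+3), preP θ m a b * (bpmf lam a x * bpmf lam b y) := by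
    intro a _
    rw [Finset.mul_sum, Finset.mul_sum]
    by_cases hx : 1 ≤ x
    · simp only [if_pos hx]
      rw [← Finset.sum_add_distrib]
      apply Finset.sum_congr rfl
      intro b _
      rw [bpmf_succ, if_pos hx]
      ring
    · simp only [if_neg hx, zero_add]
      apply Finset.sum_congr rfl
      intro b _
      rw [bpmf_succ, if_neg hx]
      ring
  rw [Finset.sum_congr rfl step]
  rw [Finset.sum_add_distrib]
  congr 1
  · by_cases hx : 1 ≤ x
    · simp only [if_pos hx]
      rw [← Finset.mul_sum, thin2 θ lam m (x-1) y (by omega) (by omega)]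
    · simp only [if_neg hx, Finset.sum_const_zero]
  · rw [← Finset.mul_sum, thin2 θ lam m x y (by omega) (by omega)]

lemma thin_shift2 (θ lam : ℝ) (m x y : ℕ) :
    ∑ a ∈ range (m+3), ∑ b ∈ range (m+3),
        (if 1 ≤ b then preP θ m a (b-1) else 0) * (bpmf lam a x * bpmf lam b y)
      = (if 1 ≤ y then lam * preP (θ*lam) m x (y-1) else 0) + (1-lam) * preP (θ*lam) m x y := by
  have swap : ∀ a ∈ range (m+3), ∑ b ∈ range (m+3),
      (if 1 ≤ b then preP θ m a (b-1) else 0) * (bpmf lam a x * bpmf lam b y)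
      = (if 1 ≤ y then lam * ∑ b ∈ range (m+2), preP θ m a b * (bpmf lam a x * bpmf lam b (y-1)) else 0)
        + (1-lam) * ∑ b ∈ range (m+2), preP θ m a b * (bpmf lam a x * bpmf lam b y) := by
    intro a _
    rw [Finset.sum_range_succ' (fun b =>
        (if 1 ≤ b then preP θ m a (b-1) else 0) * (bpmf lam a x * bpmf lam b y)) (m+2)]
    simp only [if_neg (by omega : ¬ (1 ≤ 0)), zero_mul, add_zero,
      show ∀ i : ℕ, (1 ≤ i + 1) = True from fun i => eq_true (by omega),
      show ∀ i : ℕ, (1 ≤ 1 + i) = True from fun i => eq_true (by omega),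
      if_true, Nat.add_sub_cancel]
    by_cases hy : 1 ≤ y
    · simp only [if_pos hy]
      rw [Finset.mul_sum, Finset.mul_sum, ← Finset.sum_add_distrib]
      apply Finset.sum_congr rfl
      intro b _
      rw [bpmf_succ, if_pos hy]
      ring
    · simp only [if_neg hy, zero_add]
      rw [Finset.mul_sum]
      apply Finset.sum_congr rfl
      intro b _
      rw [bpmf_succ, if_neg hy]
      ring
  rw [Finset.sum_congr rfl swap, Finset.sum_add_distrib]
  congr 1
  · by_cases hy : 1 ≤ y
    · simp only [if_pos hy]
      rw [← Finset.sum_congr rfl (fun a _ => rfl)]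
      rw [show ∑ a ∈ range (m+3), (lam * ∑ b ∈ range (m+2), preP θ m a b * (bpmf lam a x * bpmf lam b (y-1)))
          = lam * ∑ a ∈ range (m+3), ∑ b ∈ range (m+2), preP θ m a b * (bpmf lam a x * bpmf lam b (y-1))
        from (Finset.mul_sum _ _ _).symm]
      rw [thin2 θ lam m x (y-1) (by omega) (by omega)]
    · simp only [if_neg hy, Finset.sum_const_zero]
  · rw [← Finset.mul_sum, thin2 θ lam m x y (by omega) (by omega)]

def jlaw (θ w1 w2 w3 : ℝ) (m : ℕ) (z : ℕ × ℕ) : ℝ :=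
  (if 1 ≤ z.1 then w1 * preP θ m (z.1 - 1) z.2 else 0)
  + (if 1 ≤ z.2 then w2 * preP θ m z.1 (z.2 - 1) else 0)
  + w3 * preP θ m z.1 z.2

lemma jlaw_thin (θ lam w1 w2 w3 : ℝ) (m : ℕ) (x y : ℕ) :
    ∑ a ∈ range (m+3), ∑ b ∈ range (m+3),
        jlaw θ w1 w2 w3 m (a, b) * (bpmf lam a x * bpmf lam b y)
      = jlaw (θ*lam) (lam*w1) (lam*w2) (w3 + (1-lam)*(w1+w2)) m (x, y) := by
  have expand : ∀ a ∈ range (m+3), ∀ b ∈ range (m+3),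
      jlaw θ w1 w2 w3 m (a, b) * (bpmf lam a x * bpmf lam b y)
        = w1 * ((if 1 ≤ a then preP θ m (a-1) b else 0) * (bpmf lam a x * bpmf lam b y))
          + w2 * ((if 1 ≤ b then preP θ m a (b-1) else 0) * (bpmf lam a x * bpmf lam b y))
          + w3 * (preP θ m a b * (bpmf lam a x * bpmf lam b y)) := by
    intro a _ b _
    unfold jlaw
    split_ifs <;> ring
  calc ∑ a ∈ range (m+3), ∑ b ∈ range (m+3),
        jlaw θ w1 w2 w3 m (a, b) * (bpmf lam a x * bpmf lam b y)
      = w1 * (∑ a ∈ range (m+3), ∑ b ∈ range (m+3),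
            (if 1 ≤ a then preP θ m (a-1) b else 0) * (bpmf lam a x * bpmf lam b y))
        + w2 * (∑ a ∈ range (m+3), ∑ b ∈ range (m+3),
            (if 1 ≤ b then preP θ m a (b-1) else 0) * (bpmf lam a x * bpmf lam b y))
        + w3 * (∑ a ∈ range (m+3), ∑ b ∈ range (m+3),
            preP θ m a b * (bpmf lam a x * bpmf lam b y)) := by
        rw [Finset.mul_sum, Finset.mul_sum, Finset.mul_sum, ← Finset.sum_add_distrib, ← Finset.sum_add_distrib]
        apply Finset.sum_congr rfl
        intro a ha
        rw [Finset.mul_sum, Finset.mul_sum, Finset.mul_sum, ← Finset.sum_add_distrib, ← Finset.sum_add_distrib]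
        exact Finset.sum_congr rfl (fun b hb => expand a ha b hb)
    _ = _ := by
        rw [thin_shift1, thin_shift2, thin2 θ lam m x y (by omega) (by omega)]
        unfold jlaw
        simp only []
        split_ifs <;> ring

lemma jlaw_zero {θ w1 w2 w3 : ℝ} {m : ℕ} {z : ℕ × ℕ} (h : m + 1 < z.1 + z.2) :
    jlaw θ w1 w2 w3 m z = 0 := by
  unfold jlaw preP
  obtain ⟨x, y⟩ := z
  simp only at h ⊢
  have h1 : ∀ u v : ℕ, m < u + v → bpmf θ m (u + v) * bpmf (1/2) (u+v) u = 0 := by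
    intro u v huv
    rw [bpmf_eq_zero huv, zero_mul]
  split_ifs with hx hy hy
  · rw [h1 (x-1) y (by omega), h1 x (y-1) (by omega), h1 x y (by omega)]; ring
  · rw [h1 (x-1) y (by omega), h1 x y (by omega)]; ring
  · rw [h1 x (y-1) (by omega), h1 x y (by omega)]; ring
  · rw [h1 x y (by omega)]; ring

lemma jlaw_nonneg {θ w1 w2 w3 : ℝ} (hθ0 : 0 ≤ θ) (hθ1 : θ ≤ 1) (hw1 : 0 ≤ w1)
    (hw2 : 0 ≤ w2) (hw3 : 0 ≤ w3) (m : ℕ) (z : ℕ × ℕ) : 0 ≤ jlaw θ w1 w2 w3 m z := by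
  have hpre : ∀ u v : ℕ, 0 ≤ preP θ m u v := by
    intro u v
    exact mul_nonneg (bpmf_nonneg hθ0 hθ1 _ _) (bpmf_nonneg (by norm_num) (by norm_num) _ _)
  unfold jlaw
  have t1 : 0 ≤ (if 1 ≤ z.1 then w1 * preP θ m (z.1 - 1) z.2 else 0) := by
    split_ifs
    · exact mul_nonneg hw1 (hpre _ _)
    · exact le_refl 0
  have t2 : 0 ≤ (if 1 ≤ z.2 then w2 * preP θ m z.1 (z.2 - 1) else 0) := by
    split_ifs
    · exact mul_nonneg hw2 (hpre _ _)
    · exact le_refl 0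
  have t3 : 0 ≤ w3 * preP θ m z.1 z.2 := mul_nonneg hw3 (hpre _ _)
  linarith

lemma binomN_apply {θ : ℝ} (h0 : 0 ≤ θ) (h1 : θ ≤ 1) (m k : ℕ) :
    binomN θ m k = ENNReal.ofReal (bpmf θ m k) := by
  have hprob : prob θ = ENNReal.ofReal θ := by
    unfold prob
    rw [min_eq_left (ENNReal.ofReal_le_one.2 h1)]
  have hsub : (1 : ℝ≥0∞) - ENNReal.ofReal θ = ENNReal.ofReal (1 - θ) := by
    rw [← ENNReal.ofReal_one, ← ENNReal.ofReal_sub _ h0]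
  unfold binomN
  rw [PMF.map_apply, tsum_fintype]
  rcases le_or_gt k m with hk | hk
  · rw [Finset.sum_eq_single (⟨k, by omega⟩ : Fin (m+1))]
    · rw [if_pos rfl]; erw [PMF.binomial_apply]; push_cast
      rw [ENNReal.coe_toNNReal (ne_top_of_le_ne_top ENNReal.one_ne_top (prob_le_one θ)), hprob, hsub]
      rw [← ENNReal.ofReal_pow h0, ← ENNReal.ofReal_pow (by linarith : (0:ℝ) ≤ 1 - θ),
        ← ENNReal.ofReal_natCast (m.choose k),
        ← ENNReal.ofReal_mul (by positivity),
        ← ENNReal.ofReal_mul (mul_nonneg (pow_nonneg h0 _) (pow_nonneg (by linarith) _))]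
      unfold bpmf
      congr 1
      ring
    · intro i _ hne
      rw [if_neg]
      intro hik
      apply hne
      apply Fin.ext
      simp [← hik]
    · intro h
      exact absurd (Finset.mem_univ _) h
  · rw [Finset.sum_eq_zero, bpmf_eq_zero hk, ENNReal.ofReal_zero]
    intro i _
    rw [if_neg]
    intro hik
    have := i.isLt
    omega

lemma triR_apply {w1 w2 : ℝ} (h1 : 0 ≤ w1) (h2 : 0 ≤ w2) (h12 : w1 + w2 ≤ 1) :
    triR w1 w2 0 = ENNReal.ofReal w1 ∧ triR w1 w2 1 = ENNReal.ofReal w2 ∧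
      triR w1 w2 2 = ENNReal.ofReal (1 - w1 - w2) := by
  have hp1 : prob w1 = ENNReal.ofReal w1 := by
    unfold prob
    rw [min_eq_left (ENNReal.ofReal_le_one.2 (by linarith))]
  have hp2 : prob w2 = ENNReal.ofReal w2 := by
    unfold prob
    rw [min_eq_left (ENNReal.ofReal_le_one.2 (by linarith))]
  have hsub1 : (1 : ℝ≥0∞) - ENNReal.ofReal w1 = ENNReal.ofReal (1 - w1) := by
    rw [← ENNReal.ofReal_one, ← ENNReal.ofReal_sub _ h1]
  have hmin : min (prob w2) (1 - prob w1) = ENNReal.ofReal w2 := by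
    rw [hp2, hp1, hsub1, min_eq_left (ENNReal.ofReal_le_ofReal (by linarith))]
  refine ⟨?_, ?_, ?_⟩
  · show (PMF.ofFintype _ _) 0 = _
    rw [PMF.ofFintype_apply]
    simp [hp1]
  · show (PMF.ofFintype _ _) 1 = _
    rw [PMF.ofFintype_apply]
    simp [hmin]
  · show (PMF.ofFintype _ _) 2 = _
    rw [PMF.ofFintype_apply]
    simp only [Matrix.cons_val_two, Matrix.tail_cons, Matrix.head_cons]
    rw [hmin, hp1, ← ENNReal.ofReal_add h1 h2, ← ENNReal.ofReal_one,
      ← ENNReal.ofReal_sub _ (by linarith)]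
    congr 1
    ring


lemma sum_target (θ : ℝ) (m : ℕ) (s1 s2 x y : ℕ) :
    ∑ c ∈ range (m+1), bpmf θ m c * ∑ a ∈ range (c+1), bpmf (1/2) c a *
      (if (x,y) = (a+s1, c-a+s2) then (1:ℝ) else 0)
    = if s1 ≤ x ∧ s2 ≤ y then preP θ m (x-s1) (y-s2) else 0 := by
  by_cases H : s1 ≤ x ∧ s2 ≤ y
  · obtain ⟨hx, hy⟩ := H
    rw [if_pos ⟨hx, hy⟩]
    rw [Finset.sum_eq_single ((x - s1) + (y - s2))]
    · rw [Finset.sum_eq_single (x - s1)]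
      · rw [if_pos (by
          apply Prod.ext <;> simp <;> omega)]
        rw [mul_one]
        rfl
      · intro a _ hne
        rw [if_neg, mul_zero]
        intro heq
        rw [Prod.mk.injEq] at heq
        omega
      · intro hmem
        simp only [mem_range] at hmem
        omega
    · intro c _ hne
      rw [Finset.sum_eq_zero, mul_zero]
      intro a ha
      simp only [mem_range] at ha
      rw [if_neg, mul_zero]
      intro heq
      rw [Prod.mk.injEq] at heq
      omega
    · intro hmem
      simp only [mem_range] at hmem
      rw [bpmf_eq_zero (by omega), zero_mul]
  · rw [if_neg H]
    push_neg at H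
    apply Finset.sum_eq_zero
    intro c _
    rw [Finset.sum_eq_zero, mul_zero]
    intro a ha
    simp only [mem_range] at ha
    rw [if_neg, mul_zero]
    intro heq
    rw [Prod.mk.injEq] at heq
    rcases le_or_gt s1 x with h | h
    · have := H h
      omega
    · omega

lemma law_real (θ w1 w2 w3 : ℝ) (m : ℕ) (x y : ℕ) :
    ∑ c ∈ range (m+1), bpmf θ m c * ∑ a ∈ range (c+1), bpmf (1/2) c a *
      ((if (x,y) = (a+1, c-a) then w1 else 0) + (if (x,y) = (a, c-a+1) then w2 else 0)
        + (if (x,y) = (a, c-a) then w3 else 0))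
    = jlaw θ w1 w2 w3 m (x,y) := by
  have expand : ∀ c ∈ range (m+1), ∀ a ∈ range (c+1),
      bpmf (1/2) c a * ((if (x,y) = (a+1, c-a) then w1 else 0) + (if (x,y) = (a, c-a+1) then w2 else 0)
        + (if (x,y) = (a, c-a) then w3 else 0))
      = w1 * (bpmf (1/2) c a * (if (x,y) = (a+1, c-a+0) then (1:ℝ) else 0))
        + w2 * (bpmf (1/2) c a * (if (x,y) = (a+0, c-a+1) then (1:ℝ) else 0))
        + w3 * (bpmf (1/2) c a * (if (x,y) = (a+0, c-a+0) then (1:ℝ) else 0)) := by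
    intro c _ a _
    simp only [add_zero, Nat.add_zero]
    split_ifs <;> ring
  have key : ∀ c ∈ range (m+1), bpmf θ m c * (∑ a ∈ range (c+1), bpmf (1/2) c a *
      ((if (x,y) = (a+1, c-a) then w1 else 0) + (if (x,y) = (a, c-a+1) then w2 else 0)
        + (if (x,y) = (a, c-a) then w3 else 0)))
      = w1 * (bpmf θ m c * ∑ a ∈ range (c+1), bpmf (1/2) c a * (if (x,y) = (a+1, c-a+0) then (1:ℝ) else 0))
        + w2 * (bpmf θ m c * ∑ a ∈ range (c+1), bpmf (1/2) c a * (if (x,y) = (a+0, c-a+1) then (1:ℝ) else 0))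
        + w3 * (bpmf θ m c * ∑ a ∈ range (c+1), bpmf (1/2) c a * (if (x,y) = (a+0, c-a+0) then (1:ℝ) else 0)) := by
    intro c hc
    rw [Finset.sum_congr rfl (expand c hc), Finset.sum_add_distrib, Finset.sum_add_distrib,
      ← Finset.mul_sum _ _ w1, ← Finset.mul_sum _ _ w2, ← Finset.mul_sum _ _ w3]
    ring
  rw [Finset.sum_congr rfl key, Finset.sum_add_distrib, Finset.sum_add_distrib,
    ← Finset.mul_sum _ _ w1, ← Finset.mul_sum _ _ w2, ← Finset.mul_sum _ _ w3,
    sum_target θ m 1 0 x y, sum_target θ m 0 1 x y, sum_target θ m 0 0 x y]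
  unfold jlaw
  simp only [Nat.sub_zero, zero_le, true_and, and_true, if_true]
  split_ifs <;> ring

lemma ite_ofReal (c : Prop) [Decidable c] (w : ℝ) :
    (if c then ENNReal.ofReal w else 0) = ENNReal.ofReal (if c then w else 0) := by
  split_ifs
  · rfl
  · rw [ENNReal.ofReal_zero]

lemma lawP_apply (m : ℕ) {θ w1 w2 : ℝ} (hθ0 : 0 ≤ θ) (hθ1 : θ ≤ 1) (hw1 : 0 ≤ w1)
    (hw2 : 0 ≤ w2) (hw12 : w1 + w2 ≤ 1) (x y : ℕ) :
    lawP m θ (1/2) w1 w2 (x, y) = ENNReal.ofReal (jlaw θ w1 w2 (1 - w1 - w2) m (x, y)) := by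
  obtain ⟨t0, t1, t2⟩ := triR_apply hw1 hw2 hw12
  have hri : ∀ c a : ℕ, 0 ≤ (if (x,y) = (a+1, c-a) then w1 else 0)
      + (if (x,y) = (a, c-a+1) then w2 else 0) + (if (x,y) = (a, c-a) then (1-w1-w2) else 0) := by
    intro c a
    have : (0:ℝ) ≤ 1 - w1 - w2 := by linarith
    split_ifs <;> simp <;> linarith
  have mapval : ∀ c a : ℕ,
      ((triR w1 w2).map fun d =>
        if d = 0 then (a + 1, c - a) else if d = 1 then (a, c - a + 1) else (a, c - a)) (x, y)
      = ENNReal.ofReal ((if (x,y) = (a+1, c-a) then w1 else 0)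
          + (if (x,y) = (a, c-a+1) then w2 else 0)
          + (if (x,y) = (a, c-a) then (1-w1-w2) else 0)) := by
    intro c a
    rw [PMF.map_apply, tsum_fintype, Fin.sum_univ_three]
    simp only [show ((0:Fin 3) = 0) = True from by simp,
      show ((1:Fin 3) = 0) = False from by decide,
      show ((1:Fin 3) = 1) = True from by simp,
      show ((2:Fin 3) = 0) = False from by decide,
      show ((2:Fin 3) = 1) = False from by decide, if_true, if_false]
    rw [t0, t1, t2, ite_ofReal, ite_ofReal, ite_ofReal,
      ← ENNReal.ofReal_add (by split_ifs <;> simp [hw1]) (by split_ifs <;> simp [hw2]),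
      ← ENNReal.ofReal_add (by positivity) (by split_ifs <;> simp <;> linarith)]
  have inner : ∀ c : ℕ,
      ((binomN (1/2) c).bind fun a => (triR w1 w2).map fun d =>
        if d = 0 then (a + 1, c - a) else if d = 1 then (a, c - a + 1) else (a, c - a)) (x, y)
      = ENNReal.ofReal (∑ a ∈ range (c+1), bpmf (1/2) c a *
          ((if (x,y) = (a+1, c-a) then w1 else 0) + (if (x,y) = (a, c-a+1) then w2 else 0)
            + (if (x,y) = (a, c-a) then (1-w1-w2) else 0))) := by
    intro c
    rw [PMF.bind_apply]
    have step : ∀ a : ℕ, binomN (1/2) c a * ((triR w1 w2).map fun d =>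
        if d = 0 then (a + 1, c - a) else if d = 1 then (a, c - a + 1) else (a, c - a)) (x, y)
        = ENNReal.ofReal (bpmf (1/2) c a * ((if (x,y) = (a+1, c-a) then w1 else 0)
            + (if (x,y) = (a, c-a+1) then w2 else 0)
            + (if (x,y) = (a, c-a) then (1-w1-w2) else 0))) := by
      intro a
      rw [mapval c a, binomN_apply (by norm_num) (by norm_num),
        ← ENNReal.ofReal_mul (bpmf_nonneg (by norm_num) (by norm_num) _ _)]
    rw [tsum_congr step, tsum_eq_sum (s := range (c+1)) (by
      intro a ha
      simp only [mem_range] at ha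
      rw [bpmf_eq_zero (by omega), zero_mul, ENNReal.ofReal_zero])]
    rw [← ENNReal.ofReal_sum_of_nonneg (fun a _ =>
      mul_nonneg (bpmf_nonneg (by norm_num) (by norm_num) _ _) (hri c a))]
  unfold lawP
  rw [PMF.bind_apply]
  have step2 : ∀ c : ℕ, binomN θ m c * ((binomN (1/2) c).bind fun a => (triR w1 w2).map fun d =>
      if d = 0 then (a + 1, c - a) else if d = 1 then (a, c - a + 1) else (a, c - a)) (x, y)
      = ENNReal.ofReal (bpmf θ m c * ∑ a ∈ range (c+1), bpmf (1/2) c a *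
          ((if (x,y) = (a+1, c-a) then w1 else 0) + (if (x,y) = (a, c-a+1) then w2 else 0)
            + (if (x,y) = (a, c-a) then (1-w1-w2) else 0))) := by
    intro c
    rw [inner c, binomN_apply hθ0 hθ1, ← ENNReal.ofReal_mul (bpmf_nonneg hθ0 hθ1 _ _)]
  rw [tsum_congr step2, tsum_eq_sum (s := range (m+1)) (by
    intro c hc
    simp only [mem_range] at hc
    rw [bpmf_eq_zero (by omega), zero_mul, ENNReal.ofReal_zero])]
  rw [← ENNReal.ofReal_sum_of_nonneg (fun c _ =>
    mul_nonneg (bpmf_nonneg hθ0 hθ1 _ _)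
      (Finset.sum_nonneg (fun a _ =>
        mul_nonneg (bpmf_nonneg (by norm_num) (by norm_num) _ _) (hri _ a))))]
  rw [law_real]

lemma lawQ_apply (m : ℕ) {θ w1 w2 : ℝ} (hθ0 : 0 ≤ θ) (hθ1 : θ ≤ 1) (hw1 : 0 ≤ w1)
    (hw2 : 0 ≤ w2) (hw12 : w1 + w2 ≤ 1) (x y : ℕ) :
    lawQ m θ (1/2) w1 w2 (x, y) = ENNReal.ofReal (jlaw θ w2 w1 (1 - w1 - w2) m (x, y)) := by
  obtain ⟨t0, t1, t2⟩ := triR_apply hw1 hw2 hw12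
  have hri : ∀ c a : ℕ, 0 ≤ (if (x,y) = (a+1, c-a) then w2 else 0)
      + (if (x,y) = (a, c-a+1) then w1 else 0) + (if (x,y) = (a, c-a) then (1-w1-w2) else 0) := by
    intro c a
    have : (0:ℝ) ≤ 1 - w1 - w2 := by linarith
    split_ifs <;> simp <;> linarith
  have mapval : ∀ c a : ℕ,
      ((triR w1 w2).map fun d =>
        if d = 0 then (a, c - a + 1) else if d = 1 then (a + 1, c - a) else (a, c - a)) (x, y)
      = ENNReal.ofReal ((if (x,y) = (a+1, c-a) then w2 else 0)
          + (if (x,y) = (a, c-a+1) then w1 else 0)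
          + (if (x,y) = (a, c-a) then (1-w1-w2) else 0)) := by
    intro c a
    rw [PMF.map_apply, tsum_fintype, Fin.sum_univ_three]
    simp only [show ((0:Fin 3) = 0) = True from by simp,
      show ((1:Fin 3) = 0) = False from by decide,
      show ((1:Fin 3) = 1) = True from by simp,
      show ((2:Fin 3) = 0) = False from by decide,
      show ((2:Fin 3) = 1) = False from by decide, if_true, if_false]
    rw [t0, t1, t2, ite_ofReal, ite_ofReal, ite_ofReal,
      ← ENNReal.ofReal_add (by split_ifs <;> simp [hw1]) (by split_ifs <;> simp [hw2]),
      ← ENNReal.ofReal_add (by positivity) (by split_ifs <;> simp <;> linarith)]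
    congr 1
    split_ifs <;> ring
  have inner : ∀ c : ℕ,
      ((binomN (1/2) c).bind fun a => (triR w1 w2).map fun d =>
        if d = 0 then (a, c - a + 1) else if d = 1 then (a + 1, c - a) else (a, c - a)) (x, y)
      = ENNReal.ofReal (∑ a ∈ range (c+1), bpmf (1/2) c a *
          ((if (x,y) = (a+1, c-a) then w2 else 0) + (if (x,y) = (a, c-a+1) then w1 else 0)
            + (if (x,y) = (a, c-a) then (1-w1-w2) else 0))) := by
    intro c
    rw [PMF.bind_apply]
    have step : ∀ a : ℕ, binomN (1/2) c a * ((triR w1 w2).map fun d =>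
        if d = 0 then (a, c - a + 1) else if d = 1 then (a + 1, c - a) else (a, c - a)) (x, y)
        = ENNReal.ofReal (bpmf (1/2) c a * ((if (x,y) = (a+1, c-a) then w2 else 0)
            + (if (x,y) = (a, c-a+1) then w1 else 0)
            + (if (x,y) = (a, c-a) then (1-w1-w2) else 0))) := by
      intro a
      rw [mapval c a, binomN_apply (by norm_num) (by norm_num),
        ← ENNReal.ofReal_mul (bpmf_nonneg (by norm_num) (by norm_num) _ _)]
    rw [tsum_congr step, tsum_eq_sum (s := range (c+1)) (by
      intro a ha
      simp only [mem_range] at ha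
      rw [bpmf_eq_zero (by omega), zero_mul, ENNReal.ofReal_zero])]
    rw [← ENNReal.ofReal_sum_of_nonneg (fun a _ =>
      mul_nonneg (bpmf_nonneg (by norm_num) (by norm_num) _ _) (hri c a))]
  unfold lawQ
  rw [PMF.bind_apply]
  have step2 : ∀ c : ℕ, binomN θ m c * ((binomN (1/2) c).bind fun a => (triR w1 w2).map fun d =>
      if d = 0 then (a, c - a + 1) else if d = 1 then (a + 1, c - a) else (a, c - a)) (x, y)
      = ENNReal.ofReal (bpmf θ m c * ∑ a ∈ range (c+1), bpmf (1/2) c a *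
          ((if (x,y) = (a+1, c-a) then w2 else 0) + (if (x,y) = (a, c-a+1) then w1 else 0)
            + (if (x,y) = (a, c-a) then (1-w1-w2) else 0))) := by
    intro c
    rw [inner c, binomN_apply hθ0 hθ1, ← ENNReal.ofReal_mul (bpmf_nonneg hθ0 hθ1 _ _)]
  rw [tsum_congr step2, tsum_eq_sum (s := range (m+1)) (by
    intro c hc
    simp only [mem_range] at hc
    rw [bpmf_eq_zero (by omega), zero_mul, ENNReal.ofReal_zero])]
  rw [← ENNReal.ofReal_sum_of_nonneg (fun c _ =>
    mul_nonneg (bpmf_nonneg hθ0 hθ1 _ _)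
      (Finset.sum_nonneg (fun a _ =>
        mul_nonneg (bpmf_nonneg (by norm_num) (by norm_num) _ _) (hri _ a))))]
  rw [law_real]

lemma max_sum_le {ι : Type*} (s : Finset ι) (c k : ι → ℝ) (hk : ∀ i ∈ s, 0 ≤ k i) :
    max 0 (∑ i ∈ s, c i * k i) ≤ ∑ i ∈ s, max 0 (c i) * k i := by
  apply max_le
  · exact Finset.sum_nonneg fun i hi => mul_nonneg (le_max_left 0 (c i)) (hk i hi)
  · exact Finset.sum_le_sum fun i hi => mul_le_mul_of_nonneg_right (le_max_right 0 (c i)) (hk i hi)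

theorem stmt5 (n : ℕ) (hn : 1 ≤ n) (p q β β' : ℝ) (hp : 1 < p) (hq : 1 ≤ q)
    (hβ'0 : 0 ≤ β') (hβ'β : β' ≤ β) (hβ : β ≤ (p - 1) / (p + 1))
    (hr : 2 * p * β / ((p - 1) * q) ≤ 1) (γ : ℝ) (hγ : 0 ≤ γ) :
    hsDiv (Pq n p β' q) (Qq n p β' q) γ ≤ hsDiv (Pq n p β q) (Qq n p β q) γ := by
  by_cases hβ0 : β = 0
  · have hβ'e : β' = β := by rw [hβ0]; exact le_antisymm (hβ0 ▸ hβ'β) hβ'0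
    rw [hβ'e]
  have hβpos : 0 < β := lt_of_le_of_ne (hβ'0.trans hβ'β) (Ne.symm hβ0)
  have hp1 : (0:ℝ) < p - 1 := by linarith
  have hq0 : (0:ℝ) < q := by linarith
  have hβnn : (0:ℝ) ≤ β := hβpos.le
  set m := n - 1 with hm
  set lam := β' / β with hlamdef
  have hlam0 : 0 ≤ lam := div_nonneg hβ'0 hβnn
  have hlam1 : lam ≤ 1 := (div_le_one hβpos).2 hβ'β
  set θ : ℝ := 2 * (p * (β / (p - 1)) / q) with hθdef
  set θ' : ℝ := 2 * (p * (β' / (p - 1)) / q) with hθ'def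
  set w1 : ℝ := p * (β / (p - 1)) with hw1def
  set w2 : ℝ := β / (p - 1) with hw2def
  set w1' : ℝ := p * (β' / (p - 1)) with hw1'def
  set w2' : ℝ := β' / (p - 1) with hw2'def
  have hθ0 : 0 ≤ θ := by
    rw [hθdef]
    have : 0 ≤ β / (p - 1) := div_nonneg hβnn hp1.le
    positivity
  have hθ'0 : 0 ≤ θ' := by
    rw [hθ'def]
    have : 0 ≤ β' / (p - 1) := div_nonneg hβ'0 hp1.le
    positivity
  have hpne : p - 1 ≠ 0 := ne_of_gt hp1
  have hqne : q ≠ 0 := ne_of_gt hq0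
  have hθ1 : θ ≤ 1 := by
    have e : θ = 2 * p * β / ((p - 1) * q) := by
      rw [hθdef, hw1def, hw2def]; field_simp
    rw [e]; exact hr
  have hθlam : θ * lam = θ' := by
    rw [hθdef, hθ'def, hw1def, hw1'def, hw2def, hw2'def, hlamdef]; field_simp; try ring
  have hθ'1 : θ' ≤ 1 := by
    rw [← hθlam]
    calc θ * lam ≤ θ * 1 := by
          exact mul_le_mul_of_nonneg_left hlam1 hθ0
      _ = θ := mul_one θ
      _ ≤ 1 := hθ1
  have hw1lam : lam * w1 = w1' := by
    rw [hw1def, hw1'def, hw2def, hw2'def, hlamdef]; field_simp; try ring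
  have hw2lam : lam * w2 = w2' := by
    rw [hw2def, hw2'def, hlamdef]; field_simp; try ring
  have hw1nn : 0 ≤ w1 := by
    rw [hw1def, hw2def]; exact mul_nonneg (by linarith) (div_nonneg hβnn hp1.le)
  have hw2nn : 0 ≤ w2 := by
    rw [hw2def]; exact div_nonneg hβnn hp1.le
  have hw1'nn : 0 ≤ w1' := by
    rw [hw1'def, hw2'def]; exact mul_nonneg (by linarith) (div_nonneg hβ'0 hp1.le)
  have hw2'nn : 0 ≤ w2' := by
    rw [hw2'def]; exact div_nonneg hβ'0 hp1.le
  have hsum12 : ∀ b : ℝ, 0 ≤ b → b ≤ (p-1)/(p+1) →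
      p * (b / (p - 1)) + b / (p - 1) ≤ 1 := by
    intro b hb0 hb
    have hbp : b * (p + 1) ≤ p - 1 := (le_div_iff₀ (by linarith : (0:ℝ) < p + 1)).1 hb
    have e : p * (b / (p - 1)) + b / (p - 1) = b * (p + 1) / (p - 1) := by
      field_simp
    rw [e]
    exact (div_le_one hp1).2 hbp
  have hw12 : w1 + w2 ≤ 1 := by
    rw [hw1def, hw2def]; exact hsum12 β hβnn hβ
  have hw12' : w1' + w2' ≤ 1 := by
    rw [hw1'def, hw2'def]; exact hsum12 β' hβ'0 (hβ'β.trans hβ)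
  have hw3 : (1 - w1 - w2) + (1 - lam) * (w1 + w2) = 1 - w1' - w2' := by
    rw [← hw1lam, ← hw2lam]; ring
  -- value identities
  have hPβ : ∀ z : ℕ × ℕ, ((Pq n p β q) z).toReal = jlaw θ w1 w2 (1 - w1 - w2) m z := by
    intro z
    obtain ⟨x, y⟩ := z
    have e : Pq n p β q = lawP m θ (1/2) w1 w2 := rfl
    rw [e, lawP_apply m hθ0 hθ1 hw1nn hw2nn hw12 x y]
    exact ENNReal.toReal_ofReal (jlaw_nonneg hθ0 hθ1 hw1nn hw2nn (by linarith) m (x,y))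
  have hQβ : ∀ z : ℕ × ℕ, ((Qq n p β q) z).toReal = jlaw θ w2 w1 (1 - w1 - w2) m z := by
    intro z
    obtain ⟨x, y⟩ := z
    have e : Qq n p β q = lawQ m θ (1/2) w1 w2 := rfl
    rw [e, lawQ_apply m hθ0 hθ1 hw1nn hw2nn hw12 x y]
    exact ENNReal.toReal_ofReal (jlaw_nonneg hθ0 hθ1 hw2nn hw1nn (by linarith) m (x,y))
  have hPβ' : ∀ z : ℕ × ℕ, ((Pq n p β' q) z).toReal = jlaw θ' w1' w2' (1 - w1' - w2') m z := by
    intro z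
    obtain ⟨x, y⟩ := z
    have e : Pq n p β' q = lawP m θ' (1/2) w1' w2' := rfl
    rw [e, lawP_apply m hθ'0 hθ'1 hw1'nn hw2'nn hw12' x y]
    exact ENNReal.toReal_ofReal (jlaw_nonneg hθ'0 hθ'1 hw1'nn hw2'nn (by linarith) m (x,y))
  have hQβ' : ∀ z : ℕ × ℕ, ((Qq n p β' q) z).toReal = jlaw θ' w2' w1' (1 - w1' - w2') m z := by
    intro z
    obtain ⟨x, y⟩ := z
    have e : Qq n p β' q = lawQ m θ' (1/2) w1' w2' := rfl
    rw [e, lawQ_apply m hθ'0 hθ'1 hw1'nn hw2'nn hw12' x y]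
    exact ENNReal.toReal_ofReal (jlaw_nonneg hθ'0 hθ'1 hw2'nn hw1'nn (by linarith) m (x,y))
  -- thinning identities
  have keyP : ∀ z : ℕ × ℕ, jlaw θ' w1' w2' (1 - w1' - w2') m z
      = ∑ w ∈ range (m+3) ×ˢ range (m+3),
          jlaw θ w1 w2 (1 - w1 - w2) m w * (bpmf lam w.1 z.1 * bpmf lam w.2 z.2) := by
    intro z
    rw [Finset.sum_product]
    rw [← hw3, ← hθlam, ← hw1lam, ← hw2lam]
    exact (jlaw_thin θ lam w1 w2 (1 - w1 - w2) m z.1 z.2).symm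
  have keyQ : ∀ z : ℕ × ℕ, jlaw θ' w2' w1' (1 - w1' - w2') m z
      = ∑ w ∈ range (m+3) ×ˢ range (m+3),
          jlaw θ w2 w1 (1 - w1 - w2) m w * (bpmf lam w.1 z.1 * bpmf lam w.2 z.2) := by
    intro z
    rw [Finset.sum_product]
    rw [← show (1 - w1 - w2) + (1 - lam) * (w2 + w1) = 1 - w1' - w2'
      from by rw [← hw1lam, ← hw2lam]; ring, ← hθlam, ← hw2lam, ← hw1lam]
    exact (jlaw_thin θ lam w2 w1 (1 - w1 - w2) m z.1 z.2).symm
  -- finite support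
  have hsupp : ∀ (u1 u2 u3 : ℝ) (z : ℕ × ℕ), m + 1 < z.1 + z.2 →
      jlaw θ' u1 u2 u3 m z = 0 ∧ jlaw θ u1 u2 u3 m z = 0 := by
    intro u1 u2 u3 z hz
    exact ⟨jlaw_zero hz, jlaw_zero hz⟩
  have hKnn : ∀ (w z : ℕ × ℕ), 0 ≤ bpmf lam w.1 z.1 * bpmf lam w.2 z.2 := by
    intro w z
    exact mul_nonneg (bpmf_nonneg hlam0 hlam1 _ _) (bpmf_nonneg hlam0 hlam1 _ _)
  -- rewrite both hsDiv as finite sums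
  have lhs_eq : hsDiv (Pq n p β' q) (Qq n p β' q) γ
      = ∑ z ∈ range (m+2) ×ˢ range (m+2),
          max 0 (jlaw θ' w1' w2' (1 - w1' - w2') m z - γ * jlaw θ' w2' w1' (1 - w1' - w2') m z) := by
    unfold hsDiv
    rw [tsum_congr (fun z => by rw [hPβ' z, hQβ' z])]
    apply tsum_eq_sum
    intro z hz
    have hz2 : m + 1 < z.1 + z.2 := by
      simp only [Finset.mem_product, mem_range, not_and_or, not_lt] at hz
      omega
    rw [(jlaw_zero hz2 : jlaw θ' w1' w2' (1 - w1' - w2') m z = 0),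
      (jlaw_zero hz2 : jlaw θ' w2' w1' (1 - w1' - w2') m z = 0)]
    simp
  have rhs_eq : hsDiv (Pq n p β q) (Qq n p β q) γ
      = ∑ w ∈ range (m+3) ×ˢ range (m+3),
          max 0 (jlaw θ w1 w2 (1 - w1 - w2) m w - γ * jlaw θ w2 w1 (1 - w1 - w2) m w) := by
    unfold hsDiv
    rw [tsum_congr (fun z => by rw [hPβ z, hQβ z])]
    apply tsum_eq_sum
    intro z hz
    have hz2 : m + 1 < z.1 + z.2 := by
      simp only [Finset.mem_product, mem_range, not_and_or, not_lt] at hz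
      omega
    rw [(jlaw_zero hz2 : jlaw θ w1 w2 (1 - w1 - w2) m z = 0),
      (jlaw_zero hz2 : jlaw θ w2 w1 (1 - w1 - w2) m z = 0)]
    simp
  rw [lhs_eq, rhs_eq]
  -- main estimate
  calc ∑ z ∈ range (m+2) ×ˢ range (m+2),
        max 0 (jlaw θ' w1' w2' (1 - w1' - w2') m z - γ * jlaw θ' w2' w1' (1 - w1' - w2') m z)
      ≤ ∑ z ∈ range (m+2) ×ˢ range (m+2), ∑ w ∈ range (m+3) ×ˢ range (m+3),
          max 0 (jlaw θ w1 w2 (1 - w1 - w2) m w - γ * jlaw θ w2 w1 (1 - w1 - w2) m w)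
            * (bpmf lam w.1 z.1 * bpmf lam w.2 z.2) := by
        apply Finset.sum_le_sum
        intro z _
        have expand : jlaw θ' w1' w2' (1 - w1' - w2') m z - γ * jlaw θ' w2' w1' (1 - w1' - w2') m z
            = ∑ w ∈ range (m+3) ×ˢ range (m+3),
                (jlaw θ w1 w2 (1 - w1 - w2) m w - γ * jlaw θ w2 w1 (1 - w1 - w2) m w)
                  * (bpmf lam w.1 z.1 * bpmf lam w.2 z.2) := by
          rw [keyP z, keyQ z, Finset.mul_sum, ← Finset.sum_sub_distrib]
          apply Finset.sum_congr rfl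
          intro w _
          ring
        rw [expand]
        exact max_sum_le _ _ _ (fun w _ => hKnn w z)
    _ = ∑ w ∈ range (m+3) ×ˢ range (m+3),
          max 0 (jlaw θ w1 w2 (1 - w1 - w2) m w - γ * jlaw θ w2 w1 (1 - w1 - w2) m w)
            * ∑ z ∈ range (m+2) ×ˢ range (m+2), (bpmf lam w.1 z.1 * bpmf lam w.2 z.2) := by
        rw [Finset.sum_comm]
        apply Finset.sum_congr rfl
        intro w _
        rw [Finset.mul_sum]
    _ ≤ ∑ w ∈ range (m+3) ×ˢ range (m+3),
          max 0 (jlaw θ w1 w2 (1 - w1 - w2) m w - γ * jlaw θ w2 w1 (1 - w1 - w2) m w) := by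
        apply Finset.sum_le_sum
        intro w _
        rcases le_or_gt (w.1 + w.2) (m+1) with hw | hw
        · have hsum : ∑ z ∈ range (m+2) ×ˢ range (m+2), (bpmf lam w.1 z.1 * bpmf lam w.2 z.2) = 1 := by
            rw [Finset.sum_product]
            have e : ∀ a ∈ range (m+2), ∑ b ∈ range (m+2), bpmf lam w.1 a * bpmf lam w.2 b
                = bpmf lam w.1 a := by
              intro a _
              rw [← Finset.mul_sum, sum_bpmf_of_le lam (by omega), mul_one]
            rw [Finset.sum_congr rfl e, sum_bpmf_of_le lam (by omega)]
          rw [hsum, mul_one]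
        · rw [(jlaw_zero hw : jlaw θ w1 w2 (1 - w1 - w2) m w = 0),
            (jlaw_zero hw : jlaw θ w2 w1 (1 - w1 - w2) m w = 0)]
          simp

end
end

section
/- Let n ≥ 1 be an integer, p > 1, q ≥ 1, and β, β' reals with 0 < β' ≤ β ≤ (p−1)/(p+1) and 2pβ/((p−1)q) ≤ 1. Let g : ℕ×ℕ → PMF(ℕ×ℕ) be the binomial thinning kernel sending (d, e) to the law of (Binomial(d, β'/β), Binomial(e, β'/β)) with the two binomial draws independent. Then the pushforward of P^q_{β,p} under g (i.e., P^q_{β,p} composed with g via monadic bind) equals P^q_{β',p}, and the pushforward of Q^q_{β,p} under g equals Q^q_{β',p}. -/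
open scoped ENNReal
open Finset

noncomputable section

namespace PMF
theorem bind_congr' {α β : Type*} (p : PMF α) (f g : α → PMF β)
    (h : ∀ a ∈ p.support, f a = g a) : p.bind f = p.bind g :=
  PMF.ext fun b => tsum_congr fun a => by
    by_cases ha : p a = 0
    · simp [ha]
    · rw [h a ha]
end PMF

def eb (s : ℝ≥0∞) (hs : s ≤ 1) (m : ℕ) : PMF ℕ := (PMF.binomial s.toNNReal
    (show s.toNNReal ≤ 1 from by simpa using ENNReal.toNNReal_mono ENNReal.one_ne_top hs) m).map Fin.val

lemma eb_congr {s s' : ℝ≥0∞} (hs : s ≤ 1) (hs' : s' ≤ 1) (m : ℕ) (h : s = s') :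
    eb s hs m = eb s' hs' m := by subst h; rfl

lemma eb_apply (s : ℝ≥0∞) (hs : s ≤ 1) (m k : ℕ) :
    eb s hs m k = if k ≤ m then (m.choose k : ℕ) * s ^ k * (1 - s) ^ (m - k) else 0 := by
  rw [eb, PMF.map_apply, tsum_fintype]
  by_cases hk : k ≤ m
  · rw [Finset.sum_eq_single (⟨k, Nat.lt_succ_of_le hk⟩ : Fin (m + 1))]
    · simp [hk, PMF.binomial_apply, Fin.last,
        ENNReal.coe_toNNReal (ne_top_of_le_ne_top ENNReal.one_ne_top hs)]
      ring
    · intro b _ hb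
      rw [if_neg]
      intro hkb
      exact hb (by simp [Fin.ext_iff, hkb])
    · simp
  · rw [if_neg hk, Finset.sum_eq_zero]
    intro b _
    rw [if_neg]
    intro hkb
    exact hk (hkb ▸ Nat.lt_succ_iff.mp b.isLt)

lemma eb_support {s : ℝ≥0∞} {hs : s ≤ 1} {m k : ℕ} (h : k ∈ (eb s hs m).support) : k ≤ m := by
  by_contra hk
  exact h (by rw [eb_apply, if_neg hk])

lemma eb_zero (s : ℝ≥0∞) (hs : s ≤ 1) : eb s hs 0 = PMF.pure 0 := by
  ext k
  rw [eb_apply]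
  rcases Nat.eq_zero_or_pos k with rfl | hk
  · simp
  · rw [if_neg (by omega), PMF.pure_apply, if_neg (by omega)]

def bern (s : ℝ≥0∞) (hs : s ≤ 1) : PMF ℕ := (PMF.bernoulli s.toNNReal
    (show s.toNNReal ≤ 1 from by simpa using ENNReal.toNNReal_mono ENNReal.one_ne_top hs)).map (fun b => cond b 1 0)

lemma eb_one (s : ℝ≥0∞) (hs : s ≤ 1) : eb s hs 1 = bern s hs := by
  rw [eb, PMF.binomial_one_eq_bernoulli, PMF.map_comp, bern]
  congr 1
  funext b
  cases b <;> rfl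

lemma bern_bind_apply {β : Type*} (s : ℝ≥0∞) (hs : s ≤ 1) (f : ℕ → PMF β) (z : β) :
    ((bern s hs).bind f) z = s * f 1 z + (1 - s) * f 0 z := by
  rw [bern, PMF.bind_map, PMF.bind_apply, tsum_bool]
  simp [PMF.bernoulli_apply, add_comm,
    ENNReal.coe_toNNReal (ne_top_of_le_ne_top ENNReal.one_ne_top hs)]

lemma map_add_apply (p : PMF ℕ) (x k : ℕ) :
    (p.map (x + ·)) k = if x ≤ k then p (k - x) else 0 := by
  rw [PMF.map_apply]
  by_cases hx : x ≤ k
  · rw [if_pos hx, tsum_eq_single (k - x)]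
    · rw [if_pos (by omega)]
    · intro y hy
      rw [if_neg (by omega)]
  · rw [if_neg hx, ENNReal.tsum_eq_zero]
    intro y
    rw [if_neg (by omega)]


lemma one_sub_mul_aux {s t : ℝ≥0∞} (hs : s ≤ 1) (ht : t ≤ 1) :
    s * (1 - t) + (1 - s) = 1 - s * t := by
  have h1 : s * (1 - t) = s - s * t := by
    rw [ENNReal.mul_sub (fun _ _ => (lt_of_le_of_lt hs ENNReal.one_lt_top).ne), mul_one]
  rw [h1, add_comm, tsub_add_tsub_cancel hs (mul_le_of_le_one_right' ht)]

lemma bern_apply (s : ℝ≥0∞) (hs : s ≤ 1) (k : ℕ) :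
    bern s hs k = if k = 1 then s else if k = 0 then 1 - s else 0 := by
  rw [bern, PMF.map_apply, tsum_bool]
  rcases k with _ | _ | k <;> simp [PMF.bernoulli_apply,
    ENNReal.coe_toNNReal (ne_top_of_le_ne_top ENNReal.one_ne_top hs)]

lemma eb_succ (s : ℝ≥0∞) (hs : s ≤ 1) (m : ℕ) :
    eb s hs (m + 1) = (bern s hs).bind (fun x => (eb s hs m).map (x + ·)) := by
  ext k
  rw [bern_bind_apply, map_add_apply, map_add_apply, if_pos (Nat.zero_le k), Nat.sub_zero]
  cases k with
  | zero =>
    rw [if_neg (by omega : ¬ 1 ≤ 0), eb_apply, eb_apply, if_pos (Nat.zero_le _),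
      if_pos (Nat.zero_le _)]
    simp [pow_succ]
    ring
  | succ k' =>
    rw [if_pos (by omega : 1 ≤ k' + 1), Nat.add_sub_cancel, eb_apply, eb_apply, eb_apply]
    by_cases h1 : k' + 1 ≤ m
    · rw [if_pos (show k' + 1 ≤ m + 1 by omega), if_pos (show k' ≤ m by omega), if_pos h1]
      have hc : (((m + 1).choose (k' + 1) : ℕ) : ℝ≥0∞) = m.choose k' + m.choose (k' + 1) := by
        exact_mod_cast Nat.choose_succ_succ m k'
      have e1 : m + 1 - (k' + 1) = (m - (k' + 1)) + 1 := by omega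
      have e2 : m - k' = (m - (k' + 1)) + 1 := by omega
      rw [hc, e1, e2, pow_succ, pow_succ]
      ring
    · by_cases h2 : k' ≤ m
      · have hk : k' = m := by omega
        subst hk
        rw [if_pos (show k' + 1 ≤ k' + 1 from le_refl _), if_pos (le_refl k'), if_neg h1]
        simp [pow_succ]
        ring
      · rw [if_neg (show ¬ k' + 1 ≤ m + 1 by omega), if_neg h2, if_neg h1]
        simp

lemma eb_conv (s : ℝ≥0∞) (hs : s ≤ 1) (a b : ℕ) :
    (eb s hs a).bind (fun x => (eb s hs b).map (x + ·)) = eb s hs (a + b) := by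
  induction a with
  | zero =>
    rw [eb_zero, PMF.pure_bind]
    have : ((0 : ℕ) + ·) = (id : ℕ → ℕ) := funext fun y => zero_add y
    rw [this, PMF.map_id, Nat.zero_add]
  | succ a ih =>
    rw [eb_succ, PMF.bind_bind, Nat.succ_add, eb_succ]
    refine congrArg _ (funext fun u => ?_)
    rw [PMF.bind_map]
    have : (fun y => (eb s hs b).map ((u + y) + ·)) =
        fun y => ((eb s hs b).map (y + ·)).map (u + ·) := by
      funext y
      rw [PMF.map_comp]
      congr 1
      funext z
      simp [Function.comp, add_assoc]
    calc (eb s hs a).bind ((fun x => (eb s hs b).map (x + ·)) ∘ (u + ·))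
        = (eb s hs a).bind (fun y => ((eb s hs b).map (y + ·)).map (u + ·)) := by
          rw [show ((fun x => (eb s hs b).map (x + ·)) ∘ (u + ·)) =
            (fun y => (eb s hs b).map ((u + y) + ·)) from rfl, this]
      _ = ((eb s hs a).bind (fun y => (eb s hs b).map (y + ·))).map (u + ·) :=
          (PMF.map_bind _ _ _).symm
      _ = (eb s hs (a + b)).map (u + ·) := by rw [ih]

lemma bern_comp (s t : ℝ≥0∞) (hs : s ≤ 1) (ht : t ≤ 1) :
    (bern s hs).bind (fun x => eb t ht x) = bern (s * t) (mul_le_one' hs ht) := by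
  ext k
  rw [bern_bind_apply, eb_one, eb_zero]
  rcases k with _ | _ | k <;>
    simp [bern_apply, PMF.pure_apply, one_sub_mul_aux hs ht]

lemma eb_comp (s t : ℝ≥0∞) (hs : s ≤ 1) (ht : t ≤ 1) (m : ℕ) :
    (eb s hs m).bind (fun c => eb t ht c) = eb (s * t) (mul_le_one' hs ht) m := by
  induction m with
  | zero => rw [eb_zero, PMF.pure_bind, eb_zero, eb_zero]
  | succ m ih =>
    rw [eb_succ s hs, PMF.bind_bind]
    calc (bern s hs).bind (fun u => ((eb s hs m).map (u + ·)).bind fun c => eb t ht c)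
        = (bern s hs).bind (fun u => (eb s hs m).bind fun c => eb t ht (u + c)) := by
          refine congrArg _ (funext fun u => ?_)
          rw [PMF.bind_map]
          rfl
      _ = (bern s hs).bind (fun u => (eb s hs m).bind fun c =>
            (eb t ht u).bind fun x => (eb t ht c).map (x + ·)) := by
          refine congrArg _ (funext fun u => congrArg _ (funext fun c => ?_))
          rw [eb_conv]
      _ = (bern s hs).bind (fun u => (eb t ht u).bind fun x =>
            (eb s hs m).bind fun c => (eb t ht c).map (x + ·)) := by
          refine congrArg _ (funext fun u => ?_)
          exact PMF.bind_comm _ _ _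
      _ = (bern s hs).bind (fun u => (eb t ht u).bind fun x =>
            (eb (s * t) (mul_le_one' hs ht) m).map (x + ·)) := by
          refine congrArg _ (funext fun u => congrArg _ (funext fun x => ?_))
          rw [(PMF.map_bind _ _ _).symm, ih]
      _ = ((bern s hs).bind (fun u => eb t ht u)).bind (fun x =>
            (eb (s * t) (mul_le_one' hs ht) m).map (x + ·)) := (PMF.bind_bind _ _ _).symm
      _ = eb (s * t) (mul_le_one' hs ht) (m + 1) := by
          rw [bern_comp, ← eb_succ]


lemma map_congr' {α β : Type*} (p : PMF α) (f g : α → β)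
    (h : ∀ a ∈ p.support, f a = g a) : p.map f = p.map g := by
  rw [← PMF.bind_pure_comp, ← PMF.bind_pure_comp]
  exact PMF.bind_congr' _ _ _ (fun a ha => congrArg PMF.pure (h a ha))

lemma bern_support {s : ℝ≥0∞} {hs : s ≤ 1} {x : ℕ} (h : x ∈ (bern s hs).support) : x ≤ 1 :=
  eb_support (by rwa [eb_one])

/-- Independent coordinatewise thinning kernel. -/
def Tk (t : ℝ≥0∞) (ht : t ≤ 1) (v : ℕ × ℕ) : PMF (ℕ × ℕ) :=
  (eb t ht v.1).bind fun i => (eb t ht v.2).map fun j => (i, j)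

/-- Symmetric split of `c` into two halves with bias `h`. -/
def psplit (h : ℝ≥0∞) (hh : h ≤ 1) (c : ℕ) : PMF (ℕ × ℕ) :=
  (eb h hh c).map fun a => (a, c - a)

lemma psplit_zero (h : ℝ≥0∞) (hh : h ≤ 1) : psplit h hh 0 = PMF.pure (0, 0) := by
  rw [psplit, eb_zero, PMF.pure_map]

lemma psplit_one (h : ℝ≥0∞) (hh : h ≤ 1) :
    psplit h hh 1 = (bern h hh).bind fun a => PMF.pure (a, 1 - a) := by
  rw [psplit, eb_one, ← PMF.bind_pure_comp]
  rfl

lemma psplit_succ (h : ℝ≥0∞) (hh : h ≤ 1) (c : ℕ) :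
    psplit h hh (c + 1) =
      (bern h hh).bind fun x => (psplit h hh c).map ((x, 1 - x) + ·) := by
  rw [psplit, eb_succ, PMF.map_bind]
  refine PMF.bind_congr' _ _ _ (fun x hx => ?_)
  have hx1 : x ≤ 1 := bern_support hx
  rw [PMF.map_comp, psplit, PMF.map_comp]
  refine map_congr' _ _ _ (fun a ha => ?_)
  have hac : a ≤ c := eb_support ha
  simp only [Function.comp]
  refine Prod.ext rfl ?_
  show c + 1 - (x + a) = (1 - x) + (c - a)
  omega

lemma psplit_conv (h : ℝ≥0∞) (hh : h ≤ 1) (y k : ℕ) :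
    (psplit h hh y).bind (fun u => (psplit h hh k).map (u + ·)) = psplit h hh (y + k) := by
  rw [psplit, psplit, psplit, ← eb_conv h hh y k, PMF.map_bind, PMF.bind_map]
  refine PMF.bind_congr' _ _ _ (fun a ha => ?_)
  have hay : a ≤ y := eb_support ha
  simp only [Function.comp]
  rw [PMF.map_comp, PMF.map_comp]
  refine map_congr' _ _ _ (fun b hb => ?_)
  have hbk : b ≤ k := eb_support hb
  simp only [Function.comp]
  show ((a, y - a) + (b, k - b)) = (a + b, y + k - (a + b))
  refine Prod.ext rfl ?_
  show (y - a) + (k - b) = y + k - (a + b)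
  omega

lemma T_add (t : ℝ≥0∞) (ht : t ≤ 1) (u v : ℕ × ℕ) :
    Tk t ht (u + v) = (Tk t ht u).bind fun w => (Tk t ht v).map (w + ·) := by
  simp only [Tk]
  have h1 : (u + v).1 = u.1 + v.1 := rfl
  have h2 : (u + v).2 = u.2 + v.2 := rfl
  rw [h1, h2, ← eb_conv t ht u.1 v.1, PMF.bind_bind]
  simp only [← eb_conv t ht u.2 v.2, PMF.bind_map, PMF.map_bind, PMF.bind_bind,
    PMF.map_comp, Function.comp]
  refine congrArg _ (funext fun x1 => ?_)
  simp only [Function.comp_def]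
  rw [PMF.bind_comm]
  refine congrArg _ (funext fun x2 => congrArg _ (funext fun y1 => ?_))
  refine map_congr' _ _ _ (fun y2 _ => ?_)
  show (x1 + y1, x2 + y2) = (x1, x2) + (y1, y2)
  rfl


lemma mix_identity {h t X Y Z : ℝ≥0∞} (hh : h ≤ 1) :
    h * (t * X + (1 - t) * Z) + (1 - h) * (t * Y + (1 - t) * Z) =
      t * (h * X + (1 - h) * Y) + (1 - t) * Z := by
  have hh1 : h * ((1 - t) * Z) + (1 - h) * ((1 - t) * Z) = (1 - t) * Z := by
    rw [← add_mul, add_tsub_cancel_of_le hh, one_mul]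
  calc h * (t * X + (1 - t) * Z) + (1 - h) * (t * Y + (1 - t) * Z)
      = (h * (t * X) + (1 - h) * (t * Y)) + (h * ((1 - t) * Z) + (1 - h) * ((1 - t) * Z)) := by
        ring
    _ = (h * (t * X) + (1 - h) * (t * Y)) + (1 - t) * Z := by rw [hh1]
    _ = t * (h * X + (1 - h) * Y) + (1 - t) * Z := by ring

lemma Tk_10 (t : ℝ≥0∞) (ht : t ≤ 1) :
    Tk t ht (1, 0) = (bern t ht).bind fun i => PMF.pure (i, 0) := by
  rw [Tk]
  show (eb t ht 1).bind _ = _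
  rw [eb_one]
  refine congrArg _ (funext fun i => ?_)
  show (eb t ht 0).map _ = _
  rw [eb_zero, PMF.pure_map]

lemma Tk_01 (t : ℝ≥0∞) (ht : t ≤ 1) :
    Tk t ht (0, 1) = (bern t ht).bind fun j => PMF.pure (0, j) := by
  rw [Tk]
  show (eb t ht 0).bind _ = _
  rw [eb_zero, PMF.pure_bind]
  show (eb t ht 1).map _ = _
  rw [eb_one, ← PMF.bind_pure_comp]
  rfl

lemma mu_lemma (h t : ℝ≥0∞) (hh : h ≤ 1) (ht : t ≤ 1) :
    (bern h hh).bind (fun x => Tk t ht (x, 1 - x)) =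
      (bern t ht).bind (fun y => psplit h hh y) := by
  ext z
  rw [bern_bind_apply, bern_bind_apply]
  show h * Tk t ht (1, 1 - 1) z + (1 - h) * Tk t ht (0, 1 - 0) z = _
  have e1 : ((1 : ℕ), 1 - 1) = ((1 : ℕ), (0 : ℕ)) := rfl
  have e2 : ((0 : ℕ), 1 - 0) = ((0 : ℕ), (1 : ℕ)) := rfl
  rw [e1, e2, Tk_10, Tk_01, psplit_one, psplit_zero, bern_bind_apply, bern_bind_apply,
    bern_bind_apply]
  show h * (t * PMF.pure (1, 0) z + (1 - t) * PMF.pure (0, 0) z) +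
      (1 - h) * (t * PMF.pure (0, 1) z + (1 - t) * PMF.pure (0, 0) z) =
    t * (h * PMF.pure (1, 1 - 1) z + (1 - h) * PMF.pure (0, 1 - 0) z) +
      (1 - t) * PMF.pure (0, 0) z
  rw [show ((1 : ℕ), 1 - 1) = ((1 : ℕ), (0 : ℕ)) from rfl,
    show ((0 : ℕ), 1 - 0) = ((0 : ℕ), (1 : ℕ)) from rfl]
  exact mix_identity hh

lemma L3 (h t : ℝ≥0∞) (hh : h ≤ 1) (ht : t ≤ 1) (c : ℕ) :
    (psplit h hh c).bind (Tk t ht) = (eb t ht c).bind (psplit h hh) := by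
  induction c with
  | zero =>
    rw [psplit_zero, PMF.pure_bind, eb_zero, PMF.pure_bind, psplit_zero]
    show Tk t ht (0, 0) = _
    rw [Tk]
    show (eb t ht 0).bind _ = _
    rw [eb_zero, PMF.pure_bind, PMF.pure_map]
  | succ c ih =>
    rw [psplit_succ, PMF.bind_bind]
    calc (bern h hh).bind (fun x => ((psplit h hh c).map ((x, 1 - x) + ·)).bind (Tk t ht))
        = (bern h hh).bind (fun x => (psplit h hh c).bind fun v => Tk t ht ((x, 1 - x) + v)) := by
          refine congrArg _ (funext fun x => ?_)
          rw [PMF.bind_map]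
          rfl
      _ = (bern h hh).bind (fun x => (psplit h hh c).bind fun v =>
            (Tk t ht (x, 1 - x)).bind fun w => (Tk t ht v).map (w + ·)) := by
          refine congrArg _ (funext fun x => congrArg _ (funext fun v => ?_))
          rw [T_add]
      _ = (bern h hh).bind (fun x => (Tk t ht (x, 1 - x)).bind fun w =>
            (psplit h hh c).bind fun v => (Tk t ht v).map (w + ·)) := by
          refine congrArg _ (funext fun x => ?_)
          exact PMF.bind_comm _ _ _
      _ = (bern h hh).bind (fun x => (Tk t ht (x, 1 - x)).bind fun w =>
            ((psplit h hh c).bind (Tk t ht)).map (w + ·)) := by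
          refine congrArg _ (funext fun x => congrArg _ (funext fun w => ?_))
          rw [PMF.map_bind]
      _ = (bern h hh).bind (fun x => (Tk t ht (x, 1 - x)).bind fun w =>
            ((eb t ht c).bind (psplit h hh)).map (w + ·)) := by
          simp only [ih]
      _ = ((bern h hh).bind (fun x => Tk t ht (x, 1 - x))).bind (fun w =>
            ((eb t ht c).bind (psplit h hh)).map (w + ·)) := (PMF.bind_bind _ _ _).symm
      _ = (bern t ht).bind (fun y => (psplit h hh y).bind fun w =>
            ((eb t ht c).bind (psplit h hh)).map (w + ·)) := by
          rw [mu_lemma, PMF.bind_bind]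
      _ = (bern t ht).bind (fun y => (eb t ht c).bind fun k =>
            (psplit h hh y).bind fun w => (psplit h hh k).map (w + ·)) := by
          refine congrArg _ (funext fun y => ?_)
          simp only [PMF.map_bind]
          exact PMF.bind_comm _ _ _
      _ = (bern t ht).bind (fun y => (eb t ht c).bind fun k => psplit h hh (y + k)) := by
          refine congrArg _ (funext fun y => congrArg _ (funext fun k => ?_))
          rw [psplit_conv]
      _ = (eb t ht (c + 1)).bind (psplit h hh) := by
          rw [eb_succ, PMF.bind_bind]
          refine congrArg _ (funext fun y => ?_)
          rw [PMF.bind_map]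
          rfl


lemma Tk_00 (t : ℝ≥0∞) (ht : t ≤ 1) : Tk t ht (0, 0) = PMF.pure (0, 0) := by
  rw [Tk]
  show (eb t ht 0).bind _ = _
  rw [eb_zero, PMF.pure_bind, PMF.pure_map]

lemma Tk_10_apply (t : ℝ≥0∞) (ht : t ≤ 1) (z : ℕ × ℕ) :
    Tk t ht (1, 0) z =
      t * PMF.pure ((1, 0) : ℕ × ℕ) z + (1 - t) * PMF.pure ((0, 0) : ℕ × ℕ) z := by
  rw [Tk_10, bern_bind_apply]

lemma Tk_01_apply (t : ℝ≥0∞) (ht : t ≤ 1) (z : ℕ × ℕ) :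
    Tk t ht (0, 1) z =
      t * PMF.pure ((0, 1) : ℕ × ℕ) z + (1 - t) * PMF.pure ((0, 0) : ℕ × ℕ) z := by
  rw [Tk_01, bern_bind_apply]

/-- Three-point distribution with ENNReal weights `A, B, 1 - (A+B)`. -/
def ofTri (A B : ℝ≥0∞) (hAB : A + B ≤ 1) : PMF (Fin 3) :=
  PMF.ofFintype ![A, B, 1 - (A + B)] (by
    simp only [Fin.sum_univ_three, Matrix.cons_val_zero, Matrix.cons_val_one, Matrix.head_cons,
      Matrix.cons_val_two, Matrix.tail_cons]
    exact add_tsub_cancel_of_le hAB)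

lemma ofTri_bind_apply {β : Type*} (A B : ℝ≥0∞) (hAB : A + B ≤ 1) (f : Fin 3 → PMF β) (z : β) :
    ((ofTri A B hAB).bind f) z = A * f 0 z + B * f 1 z + (1 - (A + B)) * f 2 z := by
  rw [PMF.bind_apply, tsum_fintype, Fin.sum_univ_three]
  simp only [ofTri, PMF.ofFintype_apply, Matrix.cons_val_zero, Matrix.cons_val_one,
    Matrix.head_cons, Matrix.cons_val_two, Matrix.tail_cons]

lemma delta_core (t : ℝ≥0∞) (ht : t ≤ 1) (A B A' B' : ℝ≥0∞) (hAB : A + B ≤ 1)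
    (hAB' : A' + B' ≤ 1) (hA' : A' = t * A) (hB' : B' = t * B) (P1 P2 : ℕ × ℕ)
    (h1 : ∀ z, Tk t ht P1 z = t * PMF.pure P1 z + (1 - t) * PMF.pure (0, 0) z)
    (h2 : ∀ z, Tk t ht P2 z = t * PMF.pure P2 z + (1 - t) * PMF.pure (0, 0) z)
    (h10 : P1 ≠ (0, 0)) (h20 : P2 ≠ (0, 0)) (h12 : P1 ≠ P2) :
    (ofTri A B hAB).bind (fun d => Tk t ht (![P1, P2, (0, 0)] d)) =
      (ofTri A' B' hAB').map ![P1, P2, (0, 0)] := by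
  ext z
  rw [← PMF.bind_pure_comp, ofTri_bind_apply, ofTri_bind_apply]
  simp only [Matrix.cons_val_zero, Matrix.cons_val_one, Matrix.head_cons, Matrix.cons_val_two,
    Matrix.tail_cons, Function.comp]
  rw [h1, h2, Tk_00]
  by_cases hz1 : z = P1
  · subst hz1
    rw [PMF.pure_apply_self, PMF.pure_apply_of_ne _ _ h10, PMF.pure_apply_of_ne _ _ h12, hA']
    ring
  · by_cases hz2 : z = P2
    · subst hz2
      rw [PMF.pure_apply_self, PMF.pure_apply_of_ne _ _ h20,
        PMF.pure_apply_of_ne _ _ (fun h => hz1 h), hB']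
      ring
    · by_cases hz0 : z = (0, 0)
      · subst hz0
        rw [PMF.pure_apply_self, PMF.pure_apply_of_ne _ _ hz1, PMF.pure_apply_of_ne _ _ hz2]
        have e1 : A * (t * 0 + (1 - t) * 1) + B * (t * 0 + (1 - t) * 1) + (1 - (A + B)) * 1
            = (A + B) * (1 - t) + (1 - (A + B)) := by ring
        rw [e1, one_sub_mul_aux hAB ht, hA', hB']
        have e2 : t * A + t * B = (A + B) * t := by ring
        rw [e2]
        ring
      · rw [PMF.pure_apply_of_ne _ _ hz1, PMF.pure_apply_of_ne _ _ hz2,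
          PMF.pure_apply_of_ne _ _ hz0]
        ring


lemma prob_eq_ofReal {x : ℝ} (hx1 : x ≤ 1) : prob x = ENNReal.ofReal x :=
  min_eq_left (ENNReal.ofReal_le_one.mpr hx1)

lemma prob_mul {x y : ℝ} (hx0 : 0 ≤ x) (hx1 : x ≤ 1) (hy0 : 0 ≤ y) (hy1 : y ≤ 1) :
    prob (x * y) = prob x * prob y := by
  rw [prob_eq_ofReal (mul_le_one₀ hx1 hy0 hy1), prob_eq_ofReal hx1, prob_eq_ofReal hy1,
    ENNReal.ofReal_mul hx0]

lemma prob_add_le {x y : ℝ} (hx0 : 0 ≤ x) (hy0 : 0 ≤ y) (hxy : x + y ≤ 1) :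
    prob x + prob y ≤ 1 := by
  rw [prob_eq_ofReal (by linarith), prob_eq_ofReal (by linarith), ← ENNReal.ofReal_add hx0 hy0]
  exact ENNReal.ofReal_le_one.mpr hxy

/-- Canonical form of `lawP`/`lawQ`. -/
def law' (m : ℕ) (sC : ℝ≥0∞) (hsC : sC ≤ 1) (A B : ℝ≥0∞) (hAB : A + B ≤ 1)
    (δ : Fin 3 → ℕ × ℕ) : PMF (ℕ × ℕ) :=
  (eb sC hsC m).bind fun c => (psplit (prob (1 / 2)) (prob_le_one _) c).bind fun v =>
    (ofTri A B hAB).map fun d => v + δ d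

lemma law'_congr (m : ℕ) {sC sC' A B A' B' : ℝ≥0∞} (hsC : sC ≤ 1) (hsC' : sC' ≤ 1)
    (hAB : A + B ≤ 1) (hAB' : A' + B' ≤ 1) (δ : Fin 3 → ℕ × ℕ)
    (h1 : sC = sC') (h2 : A = A') (h3 : B = B') :
    law' m sC hsC A B hAB δ = law' m sC' hsC' A' B' hAB' δ := by
  subst h1; subst h2; subst h3; rfl

lemma triR_eq (w1 w2 : ℝ) (hw1 : 0 ≤ w1) (hw2 : 0 ≤ w2) (hw : w1 + w2 ≤ 1) :
    triR w1 w2 = ofTri (prob w1) (prob w2) (prob_add_le hw1 hw2 hw) := by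
  have hmin : min (prob w2) (1 - prob w1) = prob w2 :=
    min_eq_left (ENNReal.le_sub_of_add_le_left
      (lt_of_le_of_lt (prob_le_one w1) ENNReal.one_lt_top).ne (prob_add_le hw1 hw2 hw))
  ext d
  fin_cases d <;> simp [triR, ofTri, PMF.ofFintype_apply, hmin]

lemma lawP_eq (m : ℕ) (θC w1 w2 : ℝ) (hw1 : 0 ≤ w1) (hw2 : 0 ≤ w2) (hw : w1 + w2 ≤ 1) :
    lawP m θC (1 / 2) w1 w2 =
      law' m (prob θC) (prob_le_one θC) (prob w1) (prob w2) (prob_add_le hw1 hw2 hw)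
        ![(1, 0), (0, 1), (0, 0)] := by
  simp only [lawP, law']
  refine congrArg _ (funext fun c => ?_)
  rw [psplit, PMF.bind_map]
  have hb : binomN (1 / 2) c = eb (prob (1 / 2)) (prob_le_one _) c := rfl
  rw [hb]
  refine congrArg _ (funext fun a => ?_)
  simp only [Function.comp]
  rw [triR_eq w1 w2 hw1 hw2 hw]
  refine congrArg (fun f => PMF.map f _) (funext fun d => ?_)
  fin_cases d <;> rfl

lemma lawQ_eq (m : ℕ) (θC w1 w2 : ℝ) (hw1 : 0 ≤ w1) (hw2 : 0 ≤ w2) (hw : w1 + w2 ≤ 1) :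
    lawQ m θC (1 / 2) w1 w2 =
      law' m (prob θC) (prob_le_one θC) (prob w1) (prob w2) (prob_add_le hw1 hw2 hw)
        ![(0, 1), (1, 0), (0, 0)] := by
  simp only [lawQ, law']
  refine congrArg _ (funext fun c => ?_)
  rw [psplit, PMF.bind_map]
  have hb : binomN (1 / 2) c = eb (prob (1 / 2)) (prob_le_one _) c := rfl
  rw [hb]
  refine congrArg _ (funext fun a => ?_)
  simp only [Function.comp]
  rw [triR_eq w1 w2 hw1 hw2 hw]
  refine congrArg (fun f => PMF.map f _) (funext fun d => ?_)
  fin_cases d <;> rfl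

lemma law'_thin (m : ℕ) (sC t A B : ℝ≥0∞) (hsC : sC ≤ 1) (ht : t ≤ 1) (hAB : A + B ≤ 1)
    (hAB' : t * A + t * B ≤ 1) (P1 P2 : ℕ × ℕ)
    (h1 : ∀ z, Tk t ht P1 z = t * PMF.pure P1 z + (1 - t) * PMF.pure (0, 0) z)
    (h2 : ∀ z, Tk t ht P2 z = t * PMF.pure P2 z + (1 - t) * PMF.pure (0, 0) z)
    (h10 : P1 ≠ (0, 0)) (h20 : P2 ≠ (0, 0)) (h12 : P1 ≠ P2) :
    (law' m sC hsC A B hAB ![P1, P2, (0, 0)]).bind (Tk t ht) =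
      law' m (sC * t) (mul_le_one' hsC ht) (t * A) (t * B) hAB' ![P1, P2, (0, 0)] := by
  have hdelta := delta_core t ht A B (t * A) (t * B) hAB hAB' rfl rfl P1 P2 h1 h2 h10 h20 h12
  set H := prob (1 / 2)
  set hH : H ≤ 1 := prob_le_one _
  set δ : Fin 3 → ℕ × ℕ := ![P1, P2, (0, 0)] with hδ
  calc (law' m sC hsC A B hAB δ).bind (Tk t ht)
      = (eb sC hsC m).bind fun c => (psplit H hH c).bind fun v =>
          ((ofTri A B hAB).map fun d => v + δ d).bind (Tk t ht) := by
        simp only [law', PMF.bind_bind]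
        rfl
    _ = (eb sC hsC m).bind fun c => (psplit H hH c).bind fun v =>
          (Tk t ht v).bind fun w => ((ofTri (t * A) (t * B) hAB').map δ).map (w + ·) := by
        refine congrArg _ (funext fun c => congrArg _ (funext fun v => ?_))
        rw [PMF.bind_map]
        calc (ofTri A B hAB).bind ((Tk t ht) ∘ fun d => v + δ d)
            = (ofTri A B hAB).bind (fun d => (Tk t ht v).bind fun w =>
                (Tk t ht (δ d)).map (w + ·)) := by
              refine congrArg _ (funext fun d => ?_)
              show Tk t ht (v + δ d) = _
              rw [T_add]
          _ = (Tk t ht v).bind (fun w => (ofTri A B hAB).bind fun d =>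
                (Tk t ht (δ d)).map (w + ·)) := PMF.bind_comm _ _ _
          _ = (Tk t ht v).bind (fun w =>
                ((ofTri A B hAB).bind fun d => Tk t ht (δ d)).map (w + ·)) := by
              refine congrArg _ (funext fun w => ?_)
              rw [PMF.map_bind]
          _ = (Tk t ht v).bind fun w => ((ofTri (t * A) (t * B) hAB').map δ).map (w + ·) := by
              rw [hdelta]
    _ = (eb sC hsC m).bind fun c => ((psplit H hH c).bind (Tk t ht)).bind fun w =>
          ((ofTri (t * A) (t * B) hAB').map δ).map (w + ·) := by
        refine congrArg _ (funext fun c => ?_)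
        rw [PMF.bind_bind]
    _ = (eb sC hsC m).bind fun c => (eb t ht c).bind fun c' => (psplit H hH c').bind fun w =>
          ((ofTri (t * A) (t * B) hAB').map δ).map (w + ·) := by
        refine congrArg _ (funext fun c => ?_)
        rw [L3, PMF.bind_bind]
    _ = ((eb sC hsC m).bind fun c => eb t ht c).bind fun c' => (psplit H hH c').bind fun w =>
          ((ofTri (t * A) (t * B) hAB').map δ).map (w + ·) := (PMF.bind_bind _ _ _).symm
    _ = (eb (sC * t) (mul_le_one' hsC ht) m).bind fun c' => (psplit H hH c').bind fun w =>
          ((ofTri (t * A) (t * B) hAB').map δ).map (w + ·) := by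
        rw [eb_comp]
    _ = law' m (sC * t) (mul_le_one' hsC ht) (t * A) (t * B) hAB' δ := by
        simp only [law']
        refine congrArg _ (funext fun c' => congrArg _ (funext fun w => ?_))
        rw [PMF.map_comp]
        rfl

lemma lawP_thin (m : ℕ) (θC w1 w2 tr : ℝ) (hθ0 : 0 ≤ θC) (hθ1 : θC ≤ 1)
    (hw1 : 0 ≤ w1) (hw2 : 0 ≤ w2) (hw : w1 + w2 ≤ 1) (htr0 : 0 ≤ tr) (htr1 : tr ≤ 1) :
    (lawP m θC (1 / 2) w1 w2).bind (Tk (prob tr) (prob_le_one tr)) =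
      lawP m (tr * θC) (1 / 2) (tr * w1) (tr * w2) := by
  have hw1' : 0 ≤ tr * w1 := mul_nonneg htr0 hw1
  have hw2' : 0 ≤ tr * w2 := mul_nonneg htr0 hw2
  have hw' : tr * w1 + tr * w2 ≤ 1 := by nlinarith
  rw [lawP_eq m θC w1 w2 hw1 hw2 hw, lawP_eq m (tr * θC) (tr * w1) (tr * w2) hw1' hw2' hw',
    law'_thin m (prob θC) (prob tr) (prob w1) (prob w2) (prob_le_one θC) (prob_le_one tr)
      (prob_add_le hw1 hw2 hw) (by
        rw [← prob_mul htr0 htr1 hw1 (by linarith), ← prob_mul htr0 htr1 hw2 (by linarith)]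
        exact prob_add_le hw1' hw2' hw')
      (1, 0) (0, 1) (Tk_10_apply _ _) (Tk_01_apply _ _) (by decide) (by decide) (by decide)]
  exact law'_congr m _ _ _ _ _
    (by rw [prob_mul htr0 htr1 hθ0 hθ1, mul_comm])
    (prob_mul htr0 htr1 hw1 (by linarith)).symm
    (prob_mul htr0 htr1 hw2 (by linarith)).symm

lemma lawQ_thin (m : ℕ) (θC w1 w2 tr : ℝ) (hθ0 : 0 ≤ θC) (hθ1 : θC ≤ 1)
    (hw1 : 0 ≤ w1) (hw2 : 0 ≤ w2) (hw : w1 + w2 ≤ 1) (htr0 : 0 ≤ tr) (htr1 : tr ≤ 1) :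
    (lawQ m θC (1 / 2) w1 w2).bind (Tk (prob tr) (prob_le_one tr)) =
      lawQ m (tr * θC) (1 / 2) (tr * w1) (tr * w2) := by
  have hw1' : 0 ≤ tr * w1 := mul_nonneg htr0 hw1
  have hw2' : 0 ≤ tr * w2 := mul_nonneg htr0 hw2
  have hw' : tr * w1 + tr * w2 ≤ 1 := by nlinarith
  rw [lawQ_eq m θC w1 w2 hw1 hw2 hw, lawQ_eq m (tr * θC) (tr * w1) (tr * w2) hw1' hw2' hw',
    law'_thin m (prob θC) (prob tr) (prob w1) (prob w2) (prob_le_one θC) (prob_le_one tr)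
      (prob_add_le hw1 hw2 hw) (by
        rw [← prob_mul htr0 htr1 hw1 (by linarith), ← prob_mul htr0 htr1 hw2 (by linarith)]
        exact prob_add_le hw1' hw2' hw')
      (0, 1) (1, 0) (Tk_01_apply _ _) (Tk_10_apply _ _) (by decide) (by decide) (by decide)]
  exact law'_congr m _ _ _ _ _
    (by rw [prob_mul htr0 htr1 hθ0 hθ1, mul_comm])
    (prob_mul htr0 htr1 hw1 (by linarith)).symm
    (prob_mul htr0 htr1 hw2 (by linarith)).symm


theorem stmt6 (n : ℕ) (hn : 1 ≤ n) (p q β β' : ℝ) (hp : 1 < p) (hq : 1 ≤ q)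
    (hβ'0 : 0 < β') (hβ'β : β' ≤ β) (hβ : β ≤ (p - 1) / (p + 1))
    (hr : 2 * p * β / ((p - 1) * q) ≤ 1) :
    (Pq n p β q).bind (fun de =>
        (binomN (β' / β) de.1).bind fun a => (binomN (β' / β) de.2).map fun b => (a, b)) =
      Pq n p β' q ∧
    (Qq n p β q).bind (fun de =>
        (binomN (β' / β) de.1).bind fun a => (binomN (β' / β) de.2).map fun b => (a, b)) =
      Qq n p β' q := by
  have hβ0 : 0 < β := lt_of_lt_of_le hβ'0 hβ'β
  have hp0 : (0 : ℝ) < p - 1 := by linarith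
  have hq0 : (0 : ℝ) < q := by linarith
  have hpne : p - 1 ≠ 0 := ne_of_gt hp0
  have hqne : q ≠ 0 := ne_of_gt hq0
  have hβne : β ≠ 0 := ne_of_gt hβ0
  have hw10 : 0 ≤ p * (β / (p - 1)) := by positivity
  have hw20 : 0 ≤ β / (p - 1) := by positivity
  have hw : p * (β / (p - 1)) + β / (p - 1) ≤ 1 := by
    have h1 : β * (p + 1) ≤ p - 1 := (le_div_iff₀ (by linarith : (0:ℝ) < p + 1)).mp hβ
    have h2 : p * (β / (p - 1)) + β / (p - 1) = (β * (p + 1)) / (p - 1) := by ring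
    rw [h2]
    exact (div_le_one hp0).mpr h1
  have hθ0 : 0 ≤ 2 * (p * (β / (p - 1)) / q) := by positivity
  have hθ1 : 2 * (p * (β / (p - 1)) / q) ≤ 1 := by
    have h3 : 2 * (p * (β / (p - 1)) / q) = 2 * p * β / ((p - 1) * q) := by
      field_simp
    rw [h3]; exact hr
  have htr0 : 0 ≤ β' / β := by positivity
  have htr1 : β' / β ≤ 1 := (div_le_one hβ0).mpr hβ'β
  have hθ'eq : 2 * (p * (β' / (p - 1)) / q) = (β' / β) * (2 * (p * (β / (p - 1)) / q)) := by
    field_simp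
  have hw1'eq : p * (β' / (p - 1)) = (β' / β) * (p * (β / (p - 1))) := by
    field_simp
  have hw2'eq : β' / (p - 1) = (β' / β) * (β / (p - 1)) := by
    field_simp
  have eP : Pq n p β' q = lawP (n - 1) ((β' / β) * (2 * (p * (β / (p - 1)) / q))) (1 / 2)
      ((β' / β) * (p * (β / (p - 1)))) ((β' / β) * (β / (p - 1))) := by
    show lawP (n - 1) (2 * (p * (β' / (p - 1)) / q)) (1 / 2) (p * (β' / (p - 1))) (β' / (p - 1))
      = _
    rw [hθ'eq, hw1'eq, hw2'eq]
  have eQ : Qq n p β' q = lawQ (n - 1) ((β' / β) * (2 * (p * (β / (p - 1)) / q))) (1 / 2)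
      ((β' / β) * (p * (β / (p - 1)))) ((β' / β) * (β / (p - 1))) := by
    show lawQ (n - 1) (2 * (p * (β' / (p - 1)) / q)) (1 / 2) (p * (β' / (p - 1))) (β' / (p - 1))
      = _
    rw [hθ'eq, hw1'eq, hw2'eq]
  constructor
  · rw [eP]
    exact lawP_thin (n - 1) (2 * (p * (β / (p - 1)) / q)) (p * (β / (p - 1))) (β / (p - 1))
      (β' / β) hθ0 hθ1 hw10 hw20 hw htr0 htr1
  · rw [eQ]
    exact lawQ_thin (n - 1) (2 * (p * (β / (p - 1)) / q)) (p * (β / (p - 1))) (β / (p - 1))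
      (β' / β) hθ0 hθ1 hw10 hw20 hw htr0 htr1

end
end

section
/- Let n ≥ 1 be an integer, p > 1, β ∈ (0, (p−1)/(p+1)], and q₀, q₁ ≥ 1; set α = β/(p−1), r₀ = pα/q₀, r₁ = pα/q₁, and assume r₀ + r₁ < 1. Let (P, Q) = (P^{r₀,r₁}, Q^{r₀,r₁}) be the pair with parameters n, p, α, r₀, r₁. Then for all natural numbers a, b with a + b ≤ n, with g := (1−α−pα)·(n−a−b)/(1−r₀−r₁), it holds that ℙ[P = (a,b)] · ( α·a/r₀ + pα·b/r₁ + g ) = ℙ[Q = (a,b)] · ( pα·a/r₀ + α·b/r₁ + g ). -/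
open scoped ENNReal
open Finset

noncomputable section

lemma binomN_apply_s13 (θ : ℝ) (m c : ℕ) :
    binomN θ m c = if c ≤ m then (prob θ)^c * (1 - prob θ)^(m-c) * (m.choose c) else 0 := by
  rw [binomN, PMF.map_apply]
  split_ifs with h
  · rw [tsum_fintype, Finset.sum_eq_single (⟨c, Nat.lt_succ_of_le h⟩ : Fin (m+1))]
    · rw [if_pos rfl]
      refine (PMF.binomial_apply _ _ _ _).trans ?_
      congr 2
      all_goals simp only [ENNReal.coe_toNNReal (ne_top_of_le_ne_top ENNReal.one_ne_top (prob_le_one θ)), Fin.val_last]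
    · intro i _ hi
      rw [if_neg]
      intro hc
      exact hi (Fin.ext hc.symm)
    · simp
  · rw [ENNReal.tsum_eq_zero]
    intro i
    rw [if_neg]
    intro hc
    exact h (hc ▸ Nat.le_of_lt_succ i.isLt)

lemma binomN_eq_zero (θ : ℝ) (m c : ℕ) (h : m < c) : binomN θ m c = 0 := by
  rw [binomN_apply_s13, if_neg (by omega)]

lemma prob_eq {x : ℝ} (h1 : x ≤ 1) : prob x = ENNReal.ofReal x :=
  min_eq_left (ENNReal.ofReal_le_one.mpr h1)

lemma one_sub_ofReal {x : ℝ} (h0 : 0 ≤ x) :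
    1 - ENNReal.ofReal x = ENNReal.ofReal (1 - x) := by
  rw [ENNReal.ofReal_sub _ h0, ENNReal.ofReal_one]

/-- real binomial weight -/
def Br (θ : ℝ) (m c : ℕ) : ℝ :=
  if c ≤ m then (m.choose c : ℝ) * θ^c * (1-θ)^(m-c) else 0

lemma Br_nonneg {θ : ℝ} (h0 : 0 ≤ θ) (h1 : θ ≤ 1) (m c : ℕ) : 0 ≤ Br θ m c := by
  rw [Br]; split_ifs
  · exact mul_nonneg (mul_nonneg (Nat.cast_nonneg _) (pow_nonneg h0 _))
      (pow_nonneg (by linarith) _)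
  · exact le_refl 0

lemma binomN_eq_ofReal {θ : ℝ} (h0 : 0 ≤ θ) (h1 : θ ≤ 1) (m c : ℕ) :
    binomN θ m c = ENNReal.ofReal (Br θ m c) := by
  rw [binomN_apply_s13, Br]
  split_ifs
  · rw [prob_eq h1, one_sub_ofReal h0, ← ENNReal.ofReal_pow h0,
      ← ENNReal.ofReal_pow (by linarith), ← ENNReal.ofReal_natCast (m.choose c),
      ← ENNReal.ofReal_mul (pow_nonneg h0 _),
      ← ENNReal.ofReal_mul (mul_nonneg (pow_nonneg h0 _) (pow_nonneg (by linarith) _))]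
    ring_nf
  · simp

lemma triR_zero {w1 w2 : ℝ} (h1 : 0 ≤ w1) (h2 : 0 ≤ w2) (h : w1 + w2 ≤ 1) :
    triR w1 w2 0 = ENNReal.ofReal w1 := by
  rw [triR, PMF.ofFintype_apply]
  simp only [Matrix.cons_val_zero]
  exact prob_eq (by linarith)

lemma triR_one {w1 w2 : ℝ} (h1 : 0 ≤ w1) (h2 : 0 ≤ w2) (h : w1 + w2 ≤ 1) :
    triR w1 w2 1 = ENNReal.ofReal w2 := by
  rw [triR, PMF.ofFintype_apply]
  simp only [Matrix.cons_val_one, Matrix.head_cons]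
  rw [prob_eq (by linarith), prob_eq (by linarith), one_sub_ofReal h1]
  exact min_eq_left (ENNReal.ofReal_le_ofReal (by linarith))

lemma triR_two {w1 w2 : ℝ} (h1 : 0 ≤ w1) (h2 : 0 ≤ w2) (h : w1 + w2 ≤ 1) :
    triR w1 w2 2 = ENNReal.ofReal (1 - w1 - w2) := by
  rw [triR, PMF.ofFintype_apply]
  simp only [Matrix.cons_val_two, Matrix.tail_cons, Matrix.cons_val_one, Matrix.head_cons,
    Matrix.cons_val_zero]
  rw [prob_eq (by linarith : w1 ≤ 1), prob_eq (by linarith : w2 ≤ 1), one_sub_ofReal h1]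
  rw [min_eq_left (ENNReal.ofReal_le_ofReal (by linarith))]
  rw [← ENNReal.ofReal_add h1 h2, ← ENNReal.ofReal_one, ← ENNReal.ofReal_sub _ (by linarith)]
  ring_nf

lemma lawP_apply_s13 (m : ℕ) (θC θA w1 w2 : ℝ) (a b : ℕ) :
    lawP m θC θA w1 w2 (a, b) =
      (if 1 ≤ a then triR w1 w2 0 * (binomN θC m (a-1+b) * binomN θA (a-1+b) (a-1)) else 0)
      + ((if 1 ≤ b then triR w1 w2 1 * (binomN θC m (a+(b-1)) * binomN θA (a+(b-1)) a) else 0)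
      + triR w1 w2 2 * (binomN θC m (a+b) * binomN θA (a+b) a)) := by
  rw [lawP, PMF.bind_apply]
  have hmap : ∀ c a' : ℕ,
      ((triR w1 w2).map fun d =>
        if d = 0 then (a' + 1, c - a') else if d = 1 then (a', c - a' + 1) else (a', c - a')) (a, b)
      = (if (a, b) = (a' + 1, c - a') then triR w1 w2 0 else 0)
        + ((if (a, b) = (a', c - a' + 1) then triR w1 w2 1 else 0)
        + (if (a, b) = (a', c - a') then triR w1 w2 2 else 0)) := by
    intro c a'
    rw [PMF.map_apply, tsum_fintype, Fin.sum_univ_three]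
    norm_num [show (2:Fin 3) ≠ 0 from by decide, show (2:Fin 3) ≠ 1 from by decide]
    ring
  have hinner : ∀ c : ℕ,
      ((binomN θA c).bind fun a' => (triR w1 w2).map fun d =>
        if d = 0 then (a' + 1, c - a') else if d = 1 then (a', c - a' + 1) else (a', c - a')) (a, b)
      = binomN θA c (a-1) * (if (a, b) = (a-1+1, c-(a-1)) then triR w1 w2 0 else 0)
        + (binomN θA c a * (if (a, b) = (a, c-a+1) then triR w1 w2 1 else 0)
        + binomN θA c a * (if (a, b) = (a, c-a) then triR w1 w2 2 else 0)) := by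
    intro c
    rw [PMF.bind_apply]
    simp only [hmap, mul_add]
    rw [ENNReal.tsum_add, ENNReal.tsum_add]
    congr 1
    · apply tsum_eq_single
      intro a' ha'
      rw [if_neg, mul_zero]
      intro hc
      apply ha'
      have := (Prod.mk.injEq _ _ _ _).mp hc
      omega
    congr 1
    · apply tsum_eq_single
      intro a' ha'
      rw [if_neg, mul_zero]
      intro hc
      exact ha' (((Prod.mk.injEq _ _ _ _).mp hc).1).symm
    · apply tsum_eq_single
      intro a' ha'
      rw [if_neg, mul_zero]
      intro hc
      exact ha' (((Prod.mk.injEq _ _ _ _).mp hc).1).symm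
  simp only [hinner, mul_add]
  rw [ENNReal.tsum_add, ENNReal.tsum_add]
  congr 1
  · rw [tsum_eq_single (a - 1 + b) ?_]
    · rcases Nat.lt_or_ge a 1 with h | h
      · rw [if_neg (show ¬(a,b) = (a-1+1, a-1+b-(a-1)) from by rw [Prod.mk.injEq]; omega),
          if_neg (show ¬1 ≤ a from by omega), mul_zero, mul_zero]
      · rw [if_pos (show (a,b) = (a-1+1, a-1+b-(a-1)) from by rw [Prod.mk.injEq]; omega),
          if_pos h]
        ring
    · intro c hc
      by_cases hca : c < a - 1
      · rw [binomN_eq_zero _ _ _ hca, zero_mul, mul_zero]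
      · rw [if_neg, mul_zero, mul_zero]
        intro hcond
        have := (Prod.mk.injEq _ _ _ _).mp hcond
        omega
  congr 1
  · rw [tsum_eq_single (a + (b - 1)) ?_]
    · rcases Nat.lt_or_ge b 1 with h | h
      · rw [if_neg (show ¬(a,b) = (a, a+(b-1)-a+1) from by rw [Prod.mk.injEq]; omega),
          if_neg (show ¬1 ≤ b from by omega), mul_zero, mul_zero]
      · rw [if_pos (show (a,b) = (a, a+(b-1)-a+1) from by rw [Prod.mk.injEq]; omega),
          if_pos h]
        ring
    · intro c hc
      by_cases hca : c < a
      · rw [binomN_eq_zero _ _ _ hca, zero_mul, mul_zero]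
      · rw [if_neg, mul_zero, mul_zero]
        intro hcond
        have := (Prod.mk.injEq _ _ _ _).mp hcond
        omega
  · rw [tsum_eq_single (a + b) ?_]
    · rw [if_pos (show (a,b) = (a, a+b-a) from by rw [Prod.mk.injEq]; omega)]
      ring
    · intro c hc
      by_cases hca : c < a
      · rw [binomN_eq_zero _ _ _ hca, zero_mul, mul_zero]
      · rw [if_neg, mul_zero, mul_zero]
        intro hcond
        have := (Prod.mk.injEq _ _ _ _).mp hcond
        omega

lemma lawQ_apply_s13 (m : ℕ) (θC θA w1 w2 : ℝ) (a b : ℕ) :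
    lawQ m θC θA w1 w2 (a, b) =
      (if 1 ≤ a then triR w1 w2 1 * (binomN θC m (a-1+b) * binomN θA (a-1+b) (a-1)) else 0)
      + ((if 1 ≤ b then triR w1 w2 0 * (binomN θC m (a+(b-1)) * binomN θA (a+(b-1)) a) else 0)
      + triR w1 w2 2 * (binomN θC m (a+b) * binomN θA (a+b) a)) := by
  rw [lawQ, PMF.bind_apply]
  have hmap : ∀ c a' : ℕ,
      ((triR w1 w2).map fun d =>
        if d = 0 then (a', c - a' + 1) else if d = 1 then (a' + 1, c - a') else (a', c - a')) (a, b)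
      = (if (a, b) = (a' + 1, c - a') then triR w1 w2 1 else 0)
        + ((if (a, b) = (a', c - a' + 1) then triR w1 w2 0 else 0)
        + (if (a, b) = (a', c - a') then triR w1 w2 2 else 0)) := by
    intro c a'
    rw [PMF.map_apply, tsum_fintype, Fin.sum_univ_three]
    norm_num [show (2:Fin 3) ≠ 0 from by decide, show (2:Fin 3) ≠ 1 from by decide]
    ring
  have hinner : ∀ c : ℕ,
      ((binomN θA c).bind fun a' => (triR w1 w2).map fun d =>
        if d = 0 then (a', c - a' + 1) else if d = 1 then (a' + 1, c - a') else (a', c - a')) (a, b)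
      = binomN θA c (a-1) * (if (a, b) = (a-1+1, c-(a-1)) then triR w1 w2 1 else 0)
        + (binomN θA c a * (if (a, b) = (a, c-a+1) then triR w1 w2 0 else 0)
        + binomN θA c a * (if (a, b) = (a, c-a) then triR w1 w2 2 else 0)) := by
    intro c
    rw [PMF.bind_apply]
    simp only [hmap, mul_add]
    rw [ENNReal.tsum_add, ENNReal.tsum_add]
    congr 1
    · apply tsum_eq_single
      intro a' ha'
      rw [if_neg, mul_zero]
      intro hc
      apply ha'
      have := (Prod.mk.injEq _ _ _ _).mp hc
      omega
    congr 1
    · apply tsum_eq_single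
      intro a' ha'
      rw [if_neg, mul_zero]
      intro hc
      exact ha' (((Prod.mk.injEq _ _ _ _).mp hc).1).symm
    · apply tsum_eq_single
      intro a' ha'
      rw [if_neg, mul_zero]
      intro hc
      exact ha' (((Prod.mk.injEq _ _ _ _).mp hc).1).symm
  simp only [hinner, mul_add]
  rw [ENNReal.tsum_add, ENNReal.tsum_add]
  congr 1
  · rw [tsum_eq_single (a - 1 + b) ?_]
    · rcases Nat.lt_or_ge a 1 with h | h
      · rw [if_neg (show ¬(a,b) = (a-1+1, a-1+b-(a-1)) from by rw [Prod.mk.injEq]; omega),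
          if_neg (show ¬1 ≤ a from by omega), mul_zero, mul_zero]
      · rw [if_pos (show (a,b) = (a-1+1, a-1+b-(a-1)) from by rw [Prod.mk.injEq]; omega),
          if_pos h]
        ring
    · intro c hc
      by_cases hca : c < a - 1
      · rw [binomN_eq_zero _ _ _ hca, zero_mul, mul_zero]
      · rw [if_neg, mul_zero, mul_zero]
        intro hcond
        have := (Prod.mk.injEq _ _ _ _).mp hcond
        omega
  congr 1
  · rw [tsum_eq_single (a + (b - 1)) ?_]
    · rcases Nat.lt_or_ge b 1 with h | h
      · rw [if_neg (show ¬(a,b) = (a, a+(b-1)-a+1) from by rw [Prod.mk.injEq]; omega),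
          if_neg (show ¬1 ≤ b from by omega), mul_zero, mul_zero]
      · rw [if_pos (show (a,b) = (a, a+(b-1)-a+1) from by rw [Prod.mk.injEq]; omega),
          if_pos h]
        ring
    · intro c hc
      by_cases hca : c < a
      · rw [binomN_eq_zero _ _ _ hca, zero_mul, mul_zero]
      · rw [if_neg, mul_zero, mul_zero]
        intro hcond
        have := (Prod.mk.injEq _ _ _ _).mp hcond
        omega
  · rw [tsum_eq_single (a + b) ?_]
    · rw [if_pos (show (a,b) = (a, a+b-a) from by rw [Prod.mk.injEq]; omega)]
      ring
    · intro c hc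
      by_cases hca : c < a
      · rw [binomN_eq_zero _ _ _ hca, zero_mul, mul_zero]
      · rw [if_neg, mul_zero, mul_zero]
        intro hcond
        have := (Prod.mk.injEq _ _ _ _).mp hcond
        omega


lemma toReal_ite (c : Prop) [Decidable c] (x : ℝ≥0∞) :
    (if c then x else 0).toReal = if c then x.toReal else 0 := by
  split_ifs <;> simp

lemma ite_ofReal_ne_top (c : Prop) [Decidable c] (x : ℝ) :
    (if c then ENNReal.ofReal x else 0) ≠ ⊤ := by
  split_ifs <;> simp

lemma K1 (m a0 b : ℕ) (h : a0 + b + 1 ≤ m) :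
    (m + 1 - (a0+b+1)) * (m.choose (a0+b) * ((a0+b).choose a0))
      = (m.choose (a0+b+1) * ((a0+b+1).choose (a0+1))) * (a0+1) := by
  have A1 : m.choose (a0+b+1) * (a0+b+1) = m.choose (a0+b) * (m + 1 - (a0+b+1)) := by
    have := Nat.choose_succ_right_eq m (a0+b)
    rw [this]
    congr 1
    omega
  have A2 : (a0+b+1) * ((a0+b).choose a0) = (a0+b+1).choose (a0+1) * (a0+1) :=
    Nat.add_one_mul_choose_eq (a0+b) a0
  apply Nat.eq_of_mul_eq_mul_right (show 0 < a0+b+1 by omega)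
  calc (m+1-(a0+b+1)) * (m.choose (a0+b) * ((a0+b).choose a0)) * (a0+b+1)
      = (m.choose (a0+b) * (m+1-(a0+b+1))) * ((a0+b+1) * ((a0+b).choose a0)) := by ring
    _ = (m.choose (a0+b+1) * (a0+b+1)) * ((a0+b+1).choose (a0+1) * (a0+1)) := by rw [← A1, A2]
    _ = m.choose (a0+b+1) * ((a0+b+1).choose (a0+1)) * (a0+1) * (a0+b+1) := by ring

lemma K2 (m a b0 : ℕ) (h : a + b0 + 1 ≤ m) :
    (m + 1 - (a+b0+1)) * (m.choose (a+b0) * ((a+b0).choose a))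
      = (m.choose (a+b0+1) * ((a+b0+1).choose a)) * (b0+1) := by
  have A1 : m.choose (a+b0+1) * (a+b0+1) = m.choose (a+b0) * (m + 1 - (a+b0+1)) := by
    have := Nat.choose_succ_right_eq m (a+b0)
    rw [this]
    congr 1
    omega
  have A2 : (a+b0).choose a * (a+b0+1) = (a+b0+1).choose a * (b0+1) := by
    have := Nat.choose_mul_succ_eq (a+b0) a
    rw [this]
    congr 1
    omega
  apply Nat.eq_of_mul_eq_mul_right (show 0 < a+b0+1 by omega)
  calc (m+1-(a+b0+1)) * (m.choose (a+b0) * ((a+b0).choose a)) * (a+b0+1)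
      = (m.choose (a+b0) * (m+1-(a+b0+1))) * ((a+b0).choose a * (a+b0+1)) := by ring
    _ = (m.choose (a+b0+1) * (a+b0+1)) * ((a+b0+1).choose a * (b0+1)) := by rw [← A1, A2]
    _ = m.choose (a+b0+1) * ((a+b0+1).choose a) * (b0+1) * (a+b0+1) := by ring

lemma Kh1 (a0 b0 : ℕ) :
    (a0+b0+1).choose a0 * (b0+1) = (a0+b0+1).choose (a0+1) * (a0+1) := by
  have := Nat.choose_succ_right_eq (a0+b0+1) a0
  rw [this]
  congr 1
  omega

lemma MB (r0 r1 : ℝ) (hr0 : 0 < r0) (hr1 : 0 < r1) (m j k : ℕ) (hjk : j + k ≤ m) :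
    Br (r0+r1) m (j+k) * Br (r0/(r0+r1)) (j+k) j
      = (m.choose (j+k) : ℝ) * ((j+k).choose j : ℝ) * r0^j * r1^k * (1-r0-r1)^(m-(j+k)) := by
  have hσ : (0:ℝ) < r0 + r1 := by linarith
  rw [Br, Br, if_pos hjk, if_pos (Nat.le_add_right j k)]
  have h1 : 1 - r0/(r0+r1) = r1/(r0+r1) := by field_simp; ring
  have h2 : j + k - j = k := by omega
  rw [h1, h2, div_pow, div_pow]
  have h3 : 1 - (r0 + r1) = 1 - r0 - r1 := by ring
  rw [h3]
  field_simp
  ring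

lemma alg0 (M0 M1 M2 X Y w v G d : ℝ)
    (h1 : M1 * Y = M2 * X) (h2 : G * M1 = d * M0 * X) (h3 : G * M2 = d * M0 * Y) :
    (w*M1 + v*M2 + d*M0) * (v*X + w*Y + G) = (v*M1 + w*M2 + d*M0) * (w*X + v*Y + G) := by
  linear_combination (w+v)*(w-v)*h1 + (w-v)*h2 - (w-v)*h3

lemma h1R (m a b : ℕ) (r0 r1 : ℝ) (hr0 : 0 < r0) (hr1 : 0 < r1) :
    (if 1 ≤ a then Br (r0+r1) m (a-1+b) * Br (r0/(r0+r1)) (a-1+b) (a-1) else 0) * ((b:ℝ)/r1)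
      = (if 1 ≤ b then Br (r0+r1) m (a+(b-1)) * Br (r0/(r0+r1)) (a+(b-1)) a else 0) * ((a:ℝ)/r0) := by
  have hσ : (0:ℝ) < r0 + r1 := by linarith
  rcases Nat.eq_zero_or_pos a with rfl | ha
  · rw [if_neg (show ¬(1:ℕ) ≤ 0 by omega)]
    simp
  rcases Nat.eq_zero_or_pos b with rfl | hb
  · rw [if_neg (show ¬(1:ℕ) ≤ 0 by omega)]
    simp
  obtain ⟨a0, rfl⟩ : ∃ a0, a = a0 + 1 := ⟨a-1, by omega⟩
  obtain ⟨b0, rfl⟩ : ∃ b0, b = b0 + 1 := ⟨b-1, by omega⟩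
  rw [if_pos (show 1 ≤ a0+1 by omega), if_pos (show 1 ≤ b0+1 by omega)]
  have e1 : a0 + 1 - 1 + (b0+1) = a0 + b0 + 1 := by omega
  have e2 : a0 + 1 + (b0+1-1) = a0 + b0 + 1 := by omega
  rw [e1, e2]
  have e3 : a0 + 1 - 1 = a0 := by omega
  rw [e3]
  set F := Br (r0+r1) m (a0+b0+1) with hF
  rw [Br, Br]
  rw [if_pos (show a0 ≤ a0+b0+1 by omega), if_pos (show a0+1 ≤ a0+b0+1 by omega)]
  have e4 : a0 + b0 + 1 - a0 = b0 + 1 := by omega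
  have e5 : a0 + b0 + 1 - (a0+1) = b0 := by omega
  rw [e4, e5]
  have h1 : 1 - r0/(r0+r1) = r1/(r0+r1) := by field_simp; ring
  rw [h1, pow_succ (r1/(r0+r1)) b0, pow_succ (r0/(r0+r1)) a0]
  have hKR : ((a0+b0+1).choose a0 : ℝ) * ((b0:ℝ)+1) = ((a0+b0+1).choose (a0+1) : ℝ) * ((a0:ℝ)+1) := by
    have := congrArg (Nat.cast : ℕ → ℝ) (Kh1 a0 b0)
    push_cast at this
    linarith
  have key : ((a0+b0+1).choose a0 : ℝ) * (r1/(r0+r1)) * (((b0:ℝ)+1)/r1)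
      = ((a0+b0+1).choose (a0+1) : ℝ) * (r0/(r0+r1)) * (((a0:ℝ)+1)/r0) := by
    field_simp
    linear_combination hKR
  push_cast
  linear_combination (F * (r0/(r0+r1))^a0 * (r1/(r0+r1))^b0) * key

lemma h2R (m a b : ℕ) (r0 r1 : ℝ) (hr0 : 0 < r0) (hr1 : 0 < r1) (hab : a + b ≤ m + 1) :
    ((m:ℝ)+1-a-b) * (if 1 ≤ a then Br (r0+r1) m (a-1+b) * Br (r0/(r0+r1)) (a-1+b) (a-1) else 0) * r0
      = (1-r0-r1) * (Br (r0+r1) m (a+b) * Br (r0/(r0+r1)) (a+b) a) * (a:ℝ) := by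
  rcases Nat.eq_zero_or_pos a with rfl | ha
  · rw [if_neg (show ¬(1:ℕ) ≤ 0 by omega)]
    simp
  obtain ⟨a0, rfl⟩ : ∃ a0, a = a0 + 1 := ⟨a-1, by omega⟩
  rw [if_pos (show 1 ≤ a0+1 by omega)]
  rw [show a0+1-1 = a0 by omega]
  have e : a0+1+b = a0+b+1 := by omega
  rw [e]
  rcases Nat.lt_or_ge m (a0+b+1) with hm | hm
  · have hN : (m:ℝ)+1-((a0+1:ℕ):ℝ)-(b:ℝ) = 0 := by
      have : a0+b+1 = m+1 := by omega
      have := congrArg (Nat.cast : ℕ → ℝ) this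
      push_cast at this ⊢
      linarith
    rw [hN, zero_mul, zero_mul, Br, if_neg (by omega)]
    ring
  · have hMB1 := MB r0 r1 hr0 hr1 m a0 b (by omega)
    have hMB0 := MB r0 r1 hr0 hr1 m (a0+1) b (by omega)
    rw [e] at hMB0
    rw [hMB1, hMB0]
    rw [show m - (a0+b) = m - (a0+b+1) + 1 by omega, pow_succ]
    have hK := congrArg (Nat.cast : ℕ → ℝ) (K1 m a0 b (by omega))
    push_cast [Nat.cast_sub (show a0+b ≤ m by omega)] at hK
    push_cast
    linear_combination (r0^(a0+1) * r1^b * (1-r0-r1)^(m-(a0+b+1)) * (1-r0-r1)) * hK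

lemma h3R (m a b : ℕ) (r0 r1 : ℝ) (hr0 : 0 < r0) (hr1 : 0 < r1) (hab : a + b ≤ m + 1) :
    ((m:ℝ)+1-a-b) * (if 1 ≤ b then Br (r0+r1) m (a+(b-1)) * Br (r0/(r0+r1)) (a+(b-1)) a else 0) * r1
      = (1-r0-r1) * (Br (r0+r1) m (a+b) * Br (r0/(r0+r1)) (a+b) a) * (b:ℝ) := by
  rcases Nat.eq_zero_or_pos b with rfl | hb
  · rw [if_neg (show ¬(1:ℕ) ≤ 0 by omega)]
    simp
  obtain ⟨b0, rfl⟩ : ∃ b0, b = b0 + 1 := ⟨b-1, by omega⟩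
  rw [if_pos (show 1 ≤ b0+1 by omega)]
  rw [show b0+1-1 = b0 by omega]
  have e : a+(b0+1) = a+b0+1 := by omega
  rw [e]
  rcases Nat.lt_or_ge m (a+b0+1) with hm | hm
  · have hN : (m:ℝ)+1-(a:ℝ)-((b0+1:ℕ):ℝ) = 0 := by
      have : a+b0+1 = m+1 := by omega
      have := congrArg (Nat.cast : ℕ → ℝ) this
      push_cast at this ⊢
      linarith
    rw [hN, zero_mul, zero_mul, Br, if_neg (by omega)]
    ring
  · have hMB1 := MB r0 r1 hr0 hr1 m a b0 (by omega)
    have hMB0 := MB r0 r1 hr0 hr1 m a (b0+1) (by omega)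
    rw [e] at hMB0
    rw [hMB1, hMB0]
    rw [show m - (a+b0) = m - (a+b0+1) + 1 by omega, pow_succ]
    have hK := congrArg (Nat.cast : ℕ → ℝ) (K2 m a b0 (by omega))
    push_cast [Nat.cast_sub (show a+b0 ≤ m by omega)] at hK
    push_cast
    linear_combination (r0^a * r1^(b0+1) * (1-r0-r1)^(m-(a+b0+1)) * (1-r0-r1)) * hK


lemma lawP_toReal (m : ℕ) (θC θA w1 w2 : ℝ) (hC0 : 0 ≤ θC) (hC1 : θC ≤ 1)
    (hA0 : 0 ≤ θA) (hA1 : θA ≤ 1) (hw1 : 0 ≤ w1) (hw2 : 0 ≤ w2) (hw : w1 + w2 ≤ 1) (a b : ℕ) :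
    ((lawP m θC θA w1 w2) (a, b)).toReal
      = w1 * (if 1 ≤ a then Br θC m (a-1+b) * Br θA (a-1+b) (a-1) else 0)
        + w2 * (if 1 ≤ b then Br θC m (a+(b-1)) * Br θA (a+(b-1)) a else 0)
        + (1-w1-w2) * (Br θC m (a+b) * Br θA (a+b) a) := by
  have comb : ∀ (x y z : ℝ), 0 ≤ x → 0 ≤ y →
      ENNReal.ofReal x * (ENNReal.ofReal y * ENNReal.ofReal z) = ENNReal.ofReal (x*(y*z)) := by
    intro x y z hx hy
    rw [ENNReal.ofReal_mul hx, ENNReal.ofReal_mul hy]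
  rw [lawP_apply_s13, triR_zero hw1 hw2 hw, triR_one hw1 hw2 hw, triR_two hw1 hw2 hw]
  simp only [binomN_eq_ofReal hC0 hC1, binomN_eq_ofReal hA0 hA1]
  rw [comb _ _ _ hw1 (Br_nonneg hC0 hC1 _ _), comb _ _ _ hw2 (Br_nonneg hC0 hC1 _ _),
    comb _ _ _ (by linarith : (0:ℝ) ≤ 1 - w1 - w2) (Br_nonneg hC0 hC1 _ _)]
  rw [ENNReal.toReal_add (ite_ofReal_ne_top _ _)
      (ENNReal.add_ne_top.mpr ⟨ite_ofReal_ne_top _ _, ENNReal.ofReal_ne_top⟩),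
    ENNReal.toReal_add (ite_ofReal_ne_top _ _) ENNReal.ofReal_ne_top,
    toReal_ite, toReal_ite,
    ENNReal.toReal_ofReal (mul_nonneg hw1
      (mul_nonneg (Br_nonneg hC0 hC1 _ _) (Br_nonneg hA0 hA1 _ _))),
    ENNReal.toReal_ofReal (mul_nonneg hw2
      (mul_nonneg (Br_nonneg hC0 hC1 _ _) (Br_nonneg hA0 hA1 _ _))),
    ENNReal.toReal_ofReal (mul_nonneg (by linarith : (0:ℝ) ≤ 1 - w1 - w2)
      (mul_nonneg (Br_nonneg hC0 hC1 _ _) (Br_nonneg hA0 hA1 _ _)))]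
  simp only [mul_ite, mul_zero]
  ring

lemma lawQ_toReal (m : ℕ) (θC θA w1 w2 : ℝ) (hC0 : 0 ≤ θC) (hC1 : θC ≤ 1)
    (hA0 : 0 ≤ θA) (hA1 : θA ≤ 1) (hw1 : 0 ≤ w1) (hw2 : 0 ≤ w2) (hw : w1 + w2 ≤ 1) (a b : ℕ) :
    ((lawQ m θC θA w1 w2) (a, b)).toReal
      = w2 * (if 1 ≤ a then Br θC m (a-1+b) * Br θA (a-1+b) (a-1) else 0)
        + w1 * (if 1 ≤ b then Br θC m (a+(b-1)) * Br θA (a+(b-1)) a else 0)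
        + (1-w1-w2) * (Br θC m (a+b) * Br θA (a+b) a) := by
  have comb : ∀ (x y z : ℝ), 0 ≤ x → 0 ≤ y →
      ENNReal.ofReal x * (ENNReal.ofReal y * ENNReal.ofReal z) = ENNReal.ofReal (x*(y*z)) := by
    intro x y z hx hy
    rw [ENNReal.ofReal_mul hx, ENNReal.ofReal_mul hy]
  rw [lawQ_apply_s13, triR_zero hw1 hw2 hw, triR_one hw1 hw2 hw, triR_two hw1 hw2 hw]
  simp only [binomN_eq_ofReal hC0 hC1, binomN_eq_ofReal hA0 hA1]
  rw [comb _ _ _ hw2 (Br_nonneg hC0 hC1 _ _), comb _ _ _ hw1 (Br_nonneg hC0 hC1 _ _),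
    comb _ _ _ (by linarith : (0:ℝ) ≤ 1 - w1 - w2) (Br_nonneg hC0 hC1 _ _)]
  rw [ENNReal.toReal_add (ite_ofReal_ne_top _ _)
      (ENNReal.add_ne_top.mpr ⟨ite_ofReal_ne_top _ _, ENNReal.ofReal_ne_top⟩),
    ENNReal.toReal_add (ite_ofReal_ne_top _ _) ENNReal.ofReal_ne_top,
    toReal_ite, toReal_ite,
    ENNReal.toReal_ofReal (mul_nonneg hw2
      (mul_nonneg (Br_nonneg hC0 hC1 _ _) (Br_nonneg hA0 hA1 _ _))),
    ENNReal.toReal_ofReal (mul_nonneg hw1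
      (mul_nonneg (Br_nonneg hC0 hC1 _ _) (Br_nonneg hA0 hA1 _ _))),
    ENNReal.toReal_ofReal (mul_nonneg (by linarith : (0:ℝ) ≤ 1 - w1 - w2)
      (mul_nonneg (Br_nonneg hC0 hC1 _ _) (Br_nonneg hA0 hA1 _ _)))]
  simp only [mul_ite, mul_zero]
  ring


theorem stmt13 (n : ℕ) (hn : 1 ≤ n) (p β q0 q1 α r0 r1 : ℝ) (hp : 1 < p) (hβ0 : 0 < β)
    (hβ : β ≤ (p - 1) / (p + 1)) (hq0 : 1 ≤ q0) (hq1 : 1 ≤ q1)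
    (hα : α = β / (p - 1)) (hr0 : r0 = p * α / q0) (hr1 : r1 = p * α / q1)
    (hrsum : r0 + r1 < 1) (a b : ℕ) (hab : a + b ≤ n) :
    ((lawP (n - 1) (r0 + r1) (r0 / (r0 + r1)) (p * α) α) (a, b)).toReal *
        (α * a / r0 + p * α * b / r1 +
          (1 - α - p * α) * ((n : ℝ) - a - b) / (1 - r0 - r1)) =
      ((lawQ (n - 1) (r0 + r1) (r0 / (r0 + r1)) (p * α) α) (a, b)).toReal *
        (p * α * a / r0 + α * b / r1 +
          (1 - α - p * α) * ((n : ℝ) - a - b) / (1 - r0 - r1)) := by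
  have hα0 : 0 < α := by rw [hα]; exact div_pos hβ0 (by linarith)
  have hw0 : 0 < p * α := mul_pos (by linarith) hα0
  have hr0' : 0 < r0 := by rw [hr0]; exact div_pos hw0 (by linarith)
  have hr1' : 0 < r1 := by rw [hr1]; exact div_pos hw0 (by linarith)
  have hb2 : β * (p + 1) ≤ p - 1 := by
    rw [← le_div_iff₀ (by linarith : (0:ℝ) < p + 1)]
    exact hβ
  have hsum1 : p * α + α ≤ 1 := by
    have h1 : p * α + α = (p + 1) * β / (p - 1) := by rw [hα]; field_simp
    rw [h1, div_le_one (by linarith)]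
    nlinarith
  have hC1 : r0 + r1 ≤ 1 := le_of_lt hrsum
  have hθA1 : r0 / (r0 + r1) ≤ 1 := by
    rw [div_le_one (by linarith)]
    linarith
  have hs0 : (0:ℝ) < 1 - r0 - r1 := by linarith
  have hab' : a + b ≤ (n - 1) + 1 := by omega
  have hcast : ((n - 1 : ℕ) : ℝ) + 1 = (n : ℝ) := by
    rw [Nat.cast_sub hn]
    push_cast
    ring
  rw [lawP_toReal (n-1) (r0+r1) (r0/(r0+r1)) (p*α) α (by linarith) hC1
        (le_of_lt (div_pos hr0' (by linarith))) hθA1 (le_of_lt hw0) (le_of_lt hα0) hsum1 a b,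
      lawQ_toReal (n-1) (r0+r1) (r0/(r0+r1)) (p*α) α (by linarith) hC1
        (le_of_lt (div_pos hr0' (by linarith))) hθA1 (le_of_lt hw0) (le_of_lt hα0) hsum1 a b]
  have h1 := h1R (n-1) a b r0 r1 hr0' hr1'
  have h2' := h2R (n-1) a b r0 r1 hr0' hr1' hab'
  have h3' := h3R (n-1) a b r0 r1 hr0' hr1' hab'
  rw [hcast] at h2' h3'
  set M0 := Br (r0+r1) (n-1) (a+b) * Br (r0/(r0+r1)) (a+b) a with hM0
  set M1 := (if 1 ≤ a then Br (r0+r1) (n-1) (a-1+b) * Br (r0/(r0+r1)) (a-1+b) (a-1) else 0)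
    with hM1
  set M2 := (if 1 ≤ b then Br (r0+r1) (n-1) (a+(b-1)) * Br (r0/(r0+r1)) (a+(b-1)) a else 0)
    with hM2
  have h2 : ((1-α-p*α)*((n:ℝ)-(a:ℝ)-(b:ℝ))/(1-r0-r1)) * M1
      = (1-α-p*α) * M0 * ((a:ℝ)/r0) := by
    field_simp
    linear_combination (1-α-p*α) * h2'
  have h3 : ((1-α-p*α)*((n:ℝ)-(a:ℝ)-(b:ℝ))/(1-r0-r1)) * M2
      = (1-α-p*α) * M0 * ((b:ℝ)/r1) := by
    field_simp
    linear_combination (1-α-p*α) * h3'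
  have HH := alg0 M0 M1 M2 ((a:ℝ)/r0) ((b:ℝ)/r1) (p*α) α
    ((1-α-p*α)*((n:ℝ)-(a:ℝ)-(b:ℝ))/(1-r0-r1)) (1-α-p*α) h1 h2 h3
  linear_combination HH

end
end

section
/- Let P and Q be probability mass functions on a countable type, let γ ∈ (0, 1] and ε ≥ 0. Then D_{e^ε}( (1−γ)·Q + γ·P ‖ Q ) = γ · D_{(e^ε + γ − 1)/γ}( P ‖ Q ), where (1−γ)·Q + γ·P denotes the pointwise mixture. -/
open scoped ENNReal
open Finset

noncomputable section

/-- Two-point mixture `γ·P + (1−γ)·Q`. -/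
def mix2 {Y : Type*} (γ : ℝ) (P Q : PMF Y) : PMF Y :=
  (PMF.bernoulli (prob γ).toNNReal
    (by simpa using ENNReal.toNNReal_mono ENNReal.one_ne_top (prob_le_one γ))).bind fun b => if b then P else Q

lemma mix2_toReal {Y : Type*} (P Q : PMF Y) (γ : ℝ) (hγ0 : 0 ≤ γ) (hγ1 : γ ≤ 1) (y : Y) :
    ((mix2 γ P Q) y).toReal = γ * (P y).toReal + (1 - γ) * (Q y).toReal := by
  have hp : prob γ = ENNReal.ofReal γ := by
    simp [prob, min_eq_left, ENNReal.ofReal_le_one, hγ1]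
  have : (mix2 γ P Q) y = (1 - ENNReal.ofReal γ) * Q y + ENNReal.ofReal γ * P y := by
    rw [mix2, PMF.bind_apply, tsum_bool]
    simp [PMF.bernoulli_apply, hp]
  rw [this, ENNReal.toReal_add, ENNReal.toReal_mul, ENNReal.toReal_mul,
    ENNReal.toReal_ofReal hγ0]
  · rw [ENNReal.toReal_sub_of_le (by simpa [ENNReal.ofReal_le_one] using hγ1) ENNReal.one_ne_top]
    simp [ENNReal.toReal_ofReal hγ0]; ring
  · exact ENNReal.mul_ne_top (by simp [ENNReal.sub_ne_top]) (PMF.apply_ne_top Q y)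
  · exact ENNReal.mul_ne_top ENNReal.ofReal_ne_top (PMF.apply_ne_top P y)

theorem stmt16 {Y : Type*} [Countable Y] (P Q : PMF Y) (γ ε : ℝ)
    (hγ0 : 0 < γ) (hγ1 : γ ≤ 1) (hε : 0 ≤ ε) :
    hsDiv (mix2 γ P Q) Q (Real.exp ε) = γ * hsDiv P Q ((Real.exp ε + γ - 1) / γ) := by
  rw [hsDiv, hsDiv, ← tsum_mul_left]
  congr 1; funext y
  rw [mix2_toReal P Q γ hγ0.le hγ1]
  rw [mul_max_of_nonneg _ _ hγ0.le, mul_zero]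
  congr 1
  field_simp
  ring

end
end

section
/- Let P and Q be probability mass functions on a countable type and ε ≥ 0 be such that P(y) ≤ e^ε·Q(y) and Q(y) ≤ e^ε·P(y) for every y. Then D₁(P‖Q) ≤ (e^ε − 1)/(e^ε + 1); that is, any ε-LDP pair of output distributions has total variation distance at most (e^ε − 1)/(e^ε + 1). -/
open scoped ENNReal
open Finset

noncomputable section

theorem stmt17 {Y : Type*} [Countable Y] (P Q : PMF Y) (ε : ℝ) (hε : 0 ≤ ε)
    (h1 : ∀ y, (P y).toReal ≤ Real.exp ε * (Q y).toReal)
    (h2 : ∀ y, (Q y).toReal ≤ Real.exp ε * (P y).toReal) :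
    hsDiv P Q 1 ≤ (Real.exp ε - 1) / (Real.exp ε + 1) := by
  set E := Real.exp ε with hE
  have hE1 : 1 ≤ E := Real.one_le_exp hε
  have hEpos : (0:ℝ) < E + 1 := by linarith
  set c := (E - 1) / (E + 1) with hc
  have hc0 : 0 ≤ c := div_nonneg (by linarith) (by linarith)
  have hP : Summable fun y => (P y).toReal :=
    ENNReal.summable_toReal (by simp [P.tsum_coe])
  have hQ : Summable fun y => (Q y).toReal :=
    ENNReal.summable_toReal (by simp [Q.tsum_coe])
  have hPsum : ∑' y, (P y).toReal = 1 := by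
    rw [← ENNReal.tsum_toReal_eq (fun y => PMF.apply_ne_top P y), P.tsum_coe, ENNReal.toReal_one]
  have hQsum : ∑' y, (Q y).toReal = 1 := by
    rw [← ENNReal.tsum_toReal_eq (fun y => PMF.apply_ne_top Q y), Q.tsum_coe, ENNReal.toReal_one]
  set f : Y → ℝ := fun y => max 0 ((P y).toReal - (Q y).toReal) with hf
  set g : Y → ℝ := fun y => max 0 ((Q y).toReal - (P y).toReal) with hg
  have habs : ∀ y, |(P y).toReal - (Q y).toReal| ≤ c * ((P y).toReal + (Q y).toReal) := by
    intro y
    have hp : 0 ≤ (P y).toReal := ENNReal.toReal_nonneg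
    have hq : 0 ≤ (Q y).toReal := ENNReal.toReal_nonneg
    have h1y := h1 y
    have h2y := h2 y
    rw [hc, div_mul_eq_mul_div, le_div_iff₀ hEpos]
    rcases le_total ((P y).toReal) ((Q y).toReal) with h | h
    · rw [abs_of_nonpos (by linarith)]
      nlinarith
    · rw [abs_of_nonneg (by linarith)]
      nlinarith
  have hd : Summable fun y => |(P y).toReal - (Q y).toReal| := (hP.sub hQ).abs
  have hfle : ∀ y, f y ≤ |(P y).toReal - (Q y).toReal| := fun y =>
    max_le (abs_nonneg _) (le_abs_self _)
  have hgle : ∀ y, g y ≤ |(P y).toReal - (Q y).toReal| := fun y =>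
    max_le (abs_nonneg _) (by rw [abs_sub_comm]; exact le_abs_self _)
  have hfS : Summable f := Summable.of_nonneg_of_le (fun y => le_max_left _ _) hfle hd
  have hgS : Summable g := Summable.of_nonneg_of_le (fun y => le_max_left _ _) hgle hd
  have hfg_sub : ∀ y, f y - g y = (P y).toReal - (Q y).toReal := by
    intro y
    rcases le_total ((P y).toReal) ((Q y).toReal) with h | h
    · rw [hf, hg]; simp only
      rw [max_eq_left (by linarith), max_eq_right (by linarith)]; ring
    · rw [hf, hg]; simp only
      rw [max_eq_right (by linarith), max_eq_left (by linarith)]; ring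
  have hfg_add : ∀ y, f y + g y = |(P y).toReal - (Q y).toReal| := by
    intro y
    rcases le_total ((P y).toReal) ((Q y).toReal) with h | h
    · rw [hf, hg]; simp only
      rw [max_eq_left (by linarith), max_eq_right (by linarith),
        abs_of_nonpos (by linarith)]; ring
    · rw [hf, hg]; simp only
      rw [max_eq_right (by linarith), max_eq_left (by linarith),
        abs_of_nonneg (by linarith)]; ring
  have heq : ∑' y, f y = ∑' y, g y := by
    have h0 : ∑' y, (f y - g y) = 0 := by
      rw [tsum_congr hfg_sub, Summable.tsum_sub hP hQ, hPsum, hQsum, sub_self]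
    rw [Summable.tsum_sub hfS hgS] at h0
    linarith
  have h2f : 2 * ∑' y, f y ≤ 2 * c := by
    have hsum_add : ∑' y, (f y + g y) = ∑' y, f y + ∑' y, g y := Summable.tsum_add hfS hgS
    have hrhsS : Summable fun y => c * ((P y).toReal + (Q y).toReal) := ((hP.add hQ).mul_left c)
    have hle : ∑' y, (f y + g y) ≤ ∑' y, c * ((P y).toReal + (Q y).toReal) := by
      refine Summable.tsum_le_tsum (fun y => ?_) (hfS.add hgS) hrhsS
      rw [hfg_add y]; exact habs y
    have hrhs : ∑' y, c * ((P y).toReal + (Q y).toReal) = 2 * c := by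
      rw [tsum_mul_left, Summable.tsum_add hP hQ, hPsum, hQsum]; ring
    rw [hsum_add, ← heq] at hle
    rw [hrhs] at hle
    linarith
  have : hsDiv P Q 1 = ∑' y, f y := by
    unfold hsDiv; exact tsum_congr fun y => by rw [hf]; simp
  rw [this]
  linarith

end
end
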